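/- arXiv:1603.08790 — 3 statements merged into one kernel-verified Lean document; each statement's English description precedes it below -/
import Mathlib

section
/- If F_N is a probability density on ℝ^N with zero mean (∫ v_k F_N(v) dv = 0 for every k) and finite second moment, then Φ[F_N] = γ Q[F_N] + (1−γ)(1/N) Σ_{j=1}^N R_j[F_N] is a probability density on ℝ^N with zero mean and finite second moment. -/
open MeasureTheory Real Finset

noncomputable section

/-- The state space of `N` one-dimensional velocities. -/
abbrev V (N : ℕ) := Fin N → ℝ

/-- A probability density on `ℝ^N`. -/
def IsProbDensity {N : ℕ} (F : V N → ℝ) : Prop :=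
  (∀ v, 0 ≤ F v) ∧ Integrable F ∧ ∫ v, F v = 1

/-- A probability density on `ℝ`. -/
def IsProbDensity1 (g : ℝ → ℝ) : Prop :=
  (∀ x, 0 ≤ g x) ∧ Integrable g ∧ ∫ x, g x = 1

/-- The velocity vector after the Kac collision of particles `i` and `j` with angle `θ`. -/
def collide {N : ℕ} (v : V N) (i j : Fin N) (θ : ℝ) : V N :=
  Function.update (Function.update v i (v i * Real.cos θ + v j * Real.sin θ)) j
    (-(v i) * Real.sin θ + v j * Real.cos θ)

/-- Kac's collision operator `Q`. -/
def QOp {N : ℕ} (F : V N → ℝ) : V N → ℝ := fun v =>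
  (N.choose 2 : ℝ)⁻¹ * ∑ i : Fin N, ∑ j : Fin N,
    if i < j then (2 * π)⁻¹ * ∫ θ in (0:ℝ)..(2 * π), F (collide v i j θ) else 0

/-- The thermostat operator `R_j` with reservoir distribution `g`. -/
def ROp {N : ℕ} (g : ℝ → ℝ) (j : Fin N) (F : V N → ℝ) : V N → ℝ := fun v =>
  ∫ w : ℝ, (2 * π)⁻¹ * ∫ θ in (0:ℝ)..(2 * π),
    g (w * Real.cos θ - v j * Real.sin θ) *
      F (Function.update v j (v j * Real.cos θ + w * Real.sin θ))

/-- The fixed point operator `Φ = γ Q + (1-γ) (1/N) ∑ⱼ Rⱼ`. -/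
def PhiOp {N : ℕ} (γ : ℝ) (g : ℝ → ℝ) (F : V N → ℝ) : V N → ℝ := fun v =>
  γ * QOp F v + (1 - γ) * (N : ℝ)⁻¹ * ∑ j : Fin N, ROp g j F v

/-- Fourier transform of a density on `ℝ^N`. -/
def ft {N : ℕ} (f : V N → ℝ) (ξ : V N) : ℂ :=
  ∫ v : V N, (f v : ℂ) * Complex.exp (-Complex.I * ((∑ i, v i * ξ i : ℝ) : ℂ))

/-- Fourier transform of a density on `ℝ`. -/
def ft1 (f : ℝ → ℝ) (ξ : ℝ) : ℂ :=
  ∫ v : ℝ, (f v : ℂ) * Complex.exp (-Complex.I * ((v * ξ : ℝ) : ℂ))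

/-- The Gabetta–Toscani–Wennberg distance on `ℝ^N`. -/
def dGTW {N : ℕ} (f h : V N → ℝ) : ℝ :=
  ⨆ ξ : {ξ : V N // ξ ≠ 0}, ‖ft f ξ.1 - ft h ξ.1‖ / (∑ i, (ξ.1 i) ^ 2)

/-- The `T1` distance on `ℝ^N`. -/
def dT1 {N : ℕ} (f h : V N → ℝ) : ℝ :=
  ⨆ ξ : {ξ : V N // ξ ≠ 0}, ‖ft f ξ.1 - ft h ξ.1‖ / Real.sqrt (∑ i, (ξ.1 i) ^ 2)

/-- The Gabetta–Toscani–Wennberg distance on `ℝ`. -/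
def dGTW1 (f h : ℝ → ℝ) : ℝ :=
  ⨆ ξ : {ξ : ℝ // ξ ≠ 0}, ‖ft1 f ξ.1 - ft1 h ξ.1‖ / (ξ.1) ^ 2

/-- The `T1` distance on `ℝ`. -/
def dT11 (f h : ℝ → ℝ) : ℝ :=
  ⨆ ξ : {ξ : ℝ // ξ ≠ 0}, ‖ft1 f ξ.1 - ft1 h ξ.1‖ / |ξ.1|

/-- `F : ℝ → V N → ℝ` is a solution of the coupled Kac master equation
`∂ₜ F = -λN(I-Q)[F] - μ ∑ⱼ (I-Rⱼ)[F]`. -/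
def IsSolution {N : ℕ} (lam mu : ℝ) (g : ℝ → ℝ) (F : ℝ → V N → ℝ) : Prop :=
  (∀ t, IsProbDensity (F t)) ∧
    ∀ t v, HasDerivAt (fun s => F s v)
      (-(lam * N) * (F t v - QOp (F t) v) - mu * ∑ j : Fin N, (F t v - ROp g j (F t) v)) t

/-- `N`-fold tensor power of a density on `ℝ`. -/
def tensorPow (f : ℝ → ℝ) (N : ℕ) : V N → ℝ := fun v => ∏ i, f (v i)

/-- First marginal of a density on `ℝ^N`. -/
def marg1 {N : ℕ} (F : V N → ℝ) : ℝ → ℝ := fun x =>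
  ∫ w : V (N - 1),
    F (fun i => if h : (i : ℕ) = 0 then x else w ⟨(i : ℕ) - 1, by have := i.isLt; omega⟩)

/-- The `k`-th marginal of a density on `ℝ^N`. -/
def marg {N : ℕ} (k : ℕ) (F : V N → ℝ) : V k → ℝ := fun u =>
  ∫ w : V (N - k),
    F (fun i => if h : (i : ℕ) < k then u ⟨(i : ℕ), h⟩
        else w ⟨(i : ℕ) - k, by have := i.isLt; omega⟩)

/-- A density symmetric under permutations of the variables. -/
def IsSymmetric {N : ℕ} (F : V N → ℝ) : Prop :=
  ∀ σ : Equiv.Perm (Fin N), ∀ v : V N, F (v ∘ σ) = F v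

/-- `π` is a coupling of `μ` and `ν`. -/
def Coupling {α β : Type*} [MeasurableSpace α] [MeasurableSpace β]
    (γ : Measure (α × β)) (μ : Measure α) (ν : Measure β) : Prop :=
  γ.map Prod.fst = μ ∧ γ.map Prod.snd = ν

/-- Wasserstein-2 distance between measures on `ℝ^N` (Euclidean cost). -/
def W2 {N : ℕ} (μ ν : Measure (V N)) : ℝ :=
  sInf {c | ∃ γ : Measure (V N × V N), Coupling γ μ ν ∧
    c = Real.sqrt (∫ p, ∑ i, (p.1 i - p.2 i) ^ 2 ∂γ)}

/-- Wasserstein-2 distance between measures on `ℝ`. -/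
def W2r (μ ν : Measure ℝ) : ℝ :=
  sInf {c | ∃ γ : Measure (ℝ × ℝ), Coupling γ μ ν ∧
    c = Real.sqrt (∫ p, (p.1 - p.2) ^ 2 ∂γ)}

/-- The measure on `ℝ^N` with density `F`. -/
def densMeasure {N : ℕ} (F : V N → ℝ) : Measure (V N) :=
  volume.withDensity fun v => ENNReal.ofReal (F v)

/-- The measure on `ℝ` with density `f`. -/
def densMeasure1 (f : ℝ → ℝ) : Measure ℝ :=
  volume.withDensity fun x => ENNReal.ofReal (f x)

section KacAux

open Function Set

variable {N : ℕ}

lemma collide_apply {v : V N} {i j : Fin N} (hij : i ≠ j) {θ : ℝ} {k : Fin N} :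
    collide v i j θ k =
      if k = j then -(v i) * Real.sin θ + v j * Real.cos θ
      else if k = i then v i * Real.cos θ + v j * Real.sin θ
      else v k := by
  rcases eq_or_ne k j with rfl | hkj
  · simp [collide]
  · rcases eq_or_ne k i with rfl | hki
    · simp [collide, hkj, hij]
    · simp [collide, hkj, hki]

lemma collide_collide {v : V N} {i j : Fin N} (hij : i ≠ j) (θ φ : ℝ) :
    collide (collide v i j θ) i j φ = collide v i j (θ + φ) := by
  funext k
  simp only [collide_apply hij, if_neg hij, if_pos rfl, Real.cos_add, Real.sin_add]
  split_ifs <;> ring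

lemma collide_zero {v : V N} {i j : Fin N} (hij : i ≠ j) : collide v i j 0 = v := by
  funext k
  rw [collide_apply hij]
  split_ifs with h1 h2
  · simp [h1]
  · simp [h2]
  · rfl

lemma collide_inv {v : V N} {i j : Fin N} (hij : i ≠ j) (θ : ℝ) :
    collide (collide v i j θ) i j (-θ) = v := by
  rw [collide_collide hij, add_neg_cancel, collide_zero hij]

lemma collide_add {u v : V N} {i j : Fin N} (hij : i ≠ j) (θ : ℝ) :
    collide (u + v) i j θ = collide u i j θ + collide v i j θ := by
  funext k
  simp only [collide_apply hij, Pi.add_apply]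
  split_ifs <;> ring

lemma collide_smul {v : V N} {i j : Fin N} (hij : i ≠ j) (c θ : ℝ) :
    collide (c • v) i j θ = c • collide v i j θ := by
  funext k
  simp only [collide_apply hij, Pi.smul_apply, smul_eq_mul]
  split_ifs <;> ring

lemma sum_sq_collide {v : V N} {i j : Fin N} (hij : i ≠ j) (θ : ℝ) :
    ∑ k, collide v i j θ k ^ 2 = ∑ k, v k ^ 2 := by
  have key : ∀ w : Fin N → ℝ, ∑ k, w k ^ 2
      = w i ^ 2 + (w j ^ 2 + ∑ k ∈ (Finset.univ.erase i).erase j, w k ^ 2) := by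
    intro w
    rw [← Finset.add_sum_erase Finset.univ (fun k => w k ^ 2) (Finset.mem_univ i),
      ← Finset.add_sum_erase _ (fun k => w k ^ 2)
        (Finset.mem_erase.mpr ⟨hij.symm, Finset.mem_univ j⟩)]
  rw [key (fun k => collide v i j θ k), key v]
  have h1 : collide v i j θ i = v i * Real.cos θ + v j * Real.sin θ := by
    rw [collide_apply hij]; simp [hij]
  have h2 : collide v i j θ j = -(v i) * Real.sin θ + v j * Real.cos θ := by
    rw [collide_apply hij]; simp
  have h3 : ∑ k ∈ (Finset.univ.erase i).erase j, collide v i j θ k ^ 2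
      = ∑ k ∈ (Finset.univ.erase i).erase j, v k ^ 2 := by
    refine Finset.sum_congr rfl fun k hk => ?_
    have hkj : k ≠ j := (Finset.mem_erase.mp hk).1
    have hki : k ≠ i := (Finset.mem_erase.mp (Finset.mem_erase.mp hk).2).1
    rw [collide_apply hij, if_neg hkj, if_neg hki]
  rw [h1, h2, h3]
  have h := Real.sin_sq_add_cos_sq θ
  nlinarith [h]

/-- The collision as a linear isometry equivalence of Euclidean space. -/
def collideLIE (i j : Fin N) (hij : i ≠ j) (θ : ℝ) :
    EuclideanSpace ℝ (Fin N) ≃ₗᵢ[ℝ] EuclideanSpace ℝ (Fin N) where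
  toLinearEquiv :=
    { toFun := fun v => (WithLp.equiv 2 (Fin N → ℝ)).symm
        (collide ((WithLp.equiv 2 (Fin N → ℝ)) v) i j θ)
      invFun := fun v => (WithLp.equiv 2 (Fin N → ℝ)).symm
        (collide ((WithLp.equiv 2 (Fin N → ℝ)) v) i j (-θ))
      map_add' := by
        intro u v
        have h1 : (WithLp.equiv 2 (Fin N → ℝ)) (u + v)
            = (WithLp.equiv 2 (Fin N → ℝ)) u + (WithLp.equiv 2 (Fin N → ℝ)) v := rfl
        show (WithLp.equiv 2 (Fin N → ℝ)).symm
            (collide ((WithLp.equiv 2 (Fin N → ℝ)) (u + v)) i j θ) = _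
        rw [h1, collide_add hij]
        rfl
      map_smul' := by
        intro c v
        have h1 : (WithLp.equiv 2 (Fin N → ℝ)) (c • v)
            = c • (WithLp.equiv 2 (Fin N → ℝ)) v := rfl
        show (WithLp.equiv 2 (Fin N → ℝ)).symm
            (collide ((WithLp.equiv 2 (Fin N → ℝ)) (c • v)) i j θ) = _
        rw [h1, collide_smul hij]
        rfl
      left_inv := by
        intro v
        simp only [Equiv.apply_symm_apply]
        rw [collide_inv hij]
        exact (WithLp.equiv 2 (Fin N → ℝ)).symm_apply_apply v
      right_inv := by
        intro v
        simp only [Equiv.apply_symm_apply]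
        rw [collide_collide hij, neg_add_cancel, collide_zero hij]
        exact (WithLp.equiv 2 (Fin N → ℝ)).symm_apply_apply v }
  norm_map' := by
    intro v
    rw [EuclideanSpace.norm_eq, EuclideanSpace.norm_eq]
    congr 1
    have hc : ∀ k, ‖(WithLp.equiv 2 (Fin N → ℝ)).symm
        (collide ((WithLp.equiv 2 (Fin N → ℝ)) v) i j θ) k‖
        = ‖collide ((WithLp.equiv 2 (Fin N → ℝ)) v) i j θ k‖ := fun k => rfl
    simp only [hc, Real.norm_eq_abs, sq_abs]
    exact sum_sq_collide hij θ

lemma measurePreserving_collide (i j : Fin N) (hij : i ≠ j) (θ : ℝ) :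
    MeasurePreserving (fun v : V N => collide v i j θ) volume volume := by
  have h1 := EuclideanSpace.volume_preserving_symm_measurableEquiv_toLp (Fin N)
  have h2 := (collideLIE i j hij θ).measurePreserving
  have h3 := h1.comp (h2.comp h1.symm)
  exact h3

/-- The collision as a measurable equivalence. -/
def collideME (i j : Fin N) (hij : i ≠ j) (θ : ℝ) : V N ≃ᵐ V N where
  toFun := fun v => collide v i j θ
  invFun := fun v => collide v i j (-θ)
  left_inv := fun v => collide_inv hij θ
  right_inv := fun v => by
    show collide (collide v i j (-θ)) i j θ = v
    rw [collide_collide hij, neg_add_cancel, collide_zero hij]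
  measurable_toFun := (measurePreserving_collide i j hij θ).measurable
  measurable_invFun := (measurePreserving_collide i j hij (-θ)).measurable


/-- The uniform measure on the angle interval. -/
def nuA : Measure ℝ := volume.restrict (Set.Ioc (0:ℝ) (2 * π))

instance : IsFiniteMeasure nuA := by
  constructor
  rw [nuA, Measure.restrict_apply_univ]
  simp [Real.volume_Ioc]
  exact ENNReal.mul_lt_top (by norm_num) ENNReal.ofReal_lt_top

lemma nuA_univ : nuA Set.univ = ENNReal.ofReal (2 * π) := by
  rw [nuA, Measure.restrict_apply_univ, Real.volume_Ioc, sub_zero]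

lemma integral_const_nuA (c : ℝ) : ∫ _ : ℝ, c ∂nuA = (2 * π) * c := by
  rw [MeasureTheory.integral_const, measureReal_def, nuA_univ, smul_eq_mul,
    ENNReal.toReal_ofReal (by positivity)]

lemma interval_eq_nuA (f : ℝ → ℝ) : ∫ θ in (0:ℝ)..(2 * π), f θ = ∫ θ, f θ ∂nuA := by
  rw [intervalIntegral.integral_of_le (by positivity)]
  rfl

lemma measurable_collide_uncurry (i j : Fin N) (hij : i ≠ j) :
    Measurable (Function.uncurry fun (θ : ℝ) (v : V N) => collide v i j θ) := by
  show Measurable fun p : ℝ × V N => collide p.2 i j p.1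
  apply measurable_pi_lambda
  intro k
  have hrw : (fun p : ℝ × V N => collide p.2 i j p.1 k)
      = fun p : ℝ × V N => if k = j then -(p.2 i) * Real.sin p.1 + p.2 j * Real.cos p.1
        else if k = i then p.2 i * Real.cos p.1 + p.2 j * Real.sin p.1 else p.2 k := by
    funext p; rw [collide_apply hij]
  rw [hrw]
  split_ifs <;> fun_prop

/-- The skew product `(θ, v) ↦ (θ, collide v i j θ)` as a measurable equivalence. -/
def QSkewME (i j : Fin N) (hij : i ≠ j) : (ℝ × V N) ≃ᵐ (ℝ × V N) where
  toEquiv :=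
    { toFun := fun p => (p.1, collide p.2 i j p.1)
      invFun := fun p => (p.1, collide p.2 i j (-p.1))
      left_inv := fun p => by
        show (p.1, collide (collide p.2 i j p.1) i j (-p.1)) = p
        rw [collide_inv hij]
      right_inv := fun p => by
        show (p.1, collide (collide p.2 i j (-p.1)) i j p.1) = p
        rw [collide_collide hij, neg_add_cancel, collide_zero hij] }
  measurable_toFun := by
    show Measurable fun p : ℝ × V N => (p.1, collide p.2 i j p.1)
    exact measurable_fst.prodMk (measurable_collide_uncurry i j hij)
  measurable_invFun := by
    show Measurable fun p : ℝ × V N => (p.1, collide p.2 i j (-p.1))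
    refine measurable_fst.prodMk ?_
    have h1 : (fun p : ℝ × V N => collide p.2 i j (-p.1))
        = (Function.uncurry fun (θ : ℝ) (v : V N) => collide v i j θ)
          ∘ (fun p : ℝ × V N => (-p.1, p.2)) := rfl
    rw [h1]
    exact (measurable_collide_uncurry i j hij).comp
      (measurable_fst.neg.prodMk measurable_snd)

lemma measurePreserving_QSkew (i j : Fin N) (hij : i ≠ j) :
    MeasurePreserving (fun p : ℝ × V N => (p.1, collide p.2 i j p.1))
      (nuA.prod volume) (nuA.prod volume) :=
  (MeasurePreserving.id nuA).skew_product (measurable_collide_uncurry i j hij)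
    (Filter.Eventually.of_forall fun θ => (measurePreserving_collide i j hij θ).map_eq)

lemma integrable_comp_collide {G : V N → ℝ} (hG : Integrable G) {i j : Fin N}
    (hij : i ≠ j) (θ : ℝ) : Integrable (fun v : V N => G (collide v i j θ)) :=
  ((measurePreserving_collide i j hij θ).integrable_comp_emb
    (collideME i j hij θ).measurableEmbedding).2 hG

lemma integral_comp_collide (G : V N → ℝ) {i j : Fin N} (hij : i ≠ j) (θ : ℝ) :
    ∫ v : V N, G (collide v i j θ) = ∫ v, G v :=
  (measurePreserving_collide i j hij θ).integral_comp
    (collideME i j hij θ).measurableEmbedding G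

lemma integrable_prod_collide {G : V N → ℝ} (hG : Integrable G) {i j : Fin N} (hij : i ≠ j) :
    Integrable (fun p : ℝ × V N => G (collide p.2 i j p.1)) (nuA.prod volume) := by
  have h1 : Integrable (fun p : ℝ × V N => G p.2) (nuA.prod volume) := by
    have := (integrable_const (μ := nuA) (1:ℝ)).mul_prod hG
    simpa using this
  exact ((measurePreserving_QSkew i j hij).integrable_comp_emb
    (QSkewME i j hij).measurableEmbedding).2 h1

lemma QA_integrable {G : V N → ℝ} (hG : Integrable G) {i j : Fin N} (hij : i ≠ j) :
    Integrable (fun v : V N => ∫ θ, G (collide v i j θ) ∂nuA) volume :=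
  (integrable_prod_collide hG hij).integral_prod_right

lemma QA_integral {G : V N → ℝ} (hG : Integrable G) {i j : Fin N} (hij : i ≠ j) :
    ∫ v : V N, (∫ θ, G (collide v i j θ) ∂nuA) = (2 * π) * ∫ v, G v := by
  have hint : Integrable (Function.uncurry fun (θ : ℝ) (v : V N) => G (collide v i j θ))
      (nuA.prod volume) := integrable_prod_collide hG hij
  rw [← MeasureTheory.integral_integral_swap hint]
  have h2 : ∀ θ : ℝ, ∫ v : V N, G (collide v i j θ) = ∫ v, G v :=
    fun θ => integral_comp_collide G hij θ
  simp only [h2]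
  exact integral_const_nuA _

lemma integral_const_mul' {α : Type*} {m : MeasurableSpace α} (μ : Measure α) (r : ℝ)
    (f : α → ℝ) : ∫ x, r * f x ∂μ = r * ∫ x, f x ∂μ :=
  MeasureTheory.integral_const_mul r f

lemma abs_le_one_add_sq (x : ℝ) : |x| ≤ 1 + x ^ 2 := by
  nlinarith [sq_abs x, sq_nonneg (|x| - 1), abs_nonneg x]

lemma coord_sq_le_sum (v : V N) (k : Fin N) : v k ^ 2 ≤ ∑ m, v m ^ 2 :=
  Finset.single_le_sum (fun m _ => sq_nonneg (v m)) (Finset.mem_univ k)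

lemma integrable_coord_mul {F : V N → ℝ} (hFpos : ∀ v, 0 ≤ F v) (hFint : Integrable F)
    (hF2 : Integrable fun v : V N => (∑ m, v m ^ 2) * F v) (k : Fin N) :
    Integrable (fun v : V N => v k * F v) := by
  have haesm : AEStronglyMeasurable (fun v : V N => v k * F v) volume :=
    (measurable_pi_apply k).aestronglyMeasurable.mul hFint.aestronglyMeasurable
  refine (hFint.add hF2).mono' haesm (Filter.Eventually.of_forall fun v => ?_)
  have hb : |v k| ≤ 1 + ∑ m, v m ^ 2 :=
    (abs_le_one_add_sq (v k)).trans (by have := coord_sq_le_sum v k; linarith)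
  calc ‖v k * F v‖ = |v k| * F v := by
        rw [norm_mul, Real.norm_eq_abs, Real.norm_eq_abs, abs_of_nonneg (hFpos v)]
    _ ≤ (1 + ∑ m, v m ^ 2) * F v := mul_le_mul_of_nonneg_right hb (hFpos v)
    _ = F v + (∑ m, v m ^ 2) * F v := by ring

lemma count_pairs (N : ℕ) :
    (∑ i : Fin N, ∑ j : Fin N, if i < j then (1:ℝ) else 0) = N.choose 2 := by
  have hswap : (∑ i : Fin N, ∑ j : Fin N, if i < j then (1:ℝ) else 0)
      = ∑ i : Fin N, ∑ j : Fin N, if j < i then (1:ℝ) else 0 := by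
    rw [Finset.sum_comm]
  have hdiag : (∑ i : Fin N, ∑ j : Fin N, if i = j then (1:ℝ) else 0) = N := by
    simp
  have key : (∑ i : Fin N, ∑ j : Fin N, ((if i < j then (1:ℝ) else 0)
      + ((if j < i then (1:ℝ) else 0) + (if i = j then (1:ℝ) else 0)))) = (N:ℝ) * N := by
    calc (∑ i : Fin N, ∑ j : Fin N, ((if i < j then (1:ℝ) else 0)
        + ((if j < i then (1:ℝ) else 0) + (if i = j then (1:ℝ) else 0))))
        = ∑ _i : Fin N, ∑ _j : Fin N, (1:ℝ) := by
          refine Finset.sum_congr rfl fun i _ => Finset.sum_congr rfl fun j _ => ?_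
          rcases lt_trichotomy i j with h|h|h
          · simp [h, h.ne, lt_asymm h]
          · simp [h, lt_irrefl]
          · simp [h, h.ne', lt_asymm h]
      _ = (N:ℝ) * N := by simp [Finset.sum_const, Finset.card_univ]
  simp only [Finset.sum_add_distrib] at key
  rw [← hswap, hdiag] at key
  rw [Nat.cast_choose_two]
  linarith

section QLemmas

variable {F : V N → ℝ}

lemma QOp_rewrite : QOp F = fun v =>
    (N.choose 2 : ℝ)⁻¹ * ∑ i, ∑ j,
      if i < j then (2 * π)⁻¹ * ∫ θ, F (collide v i j θ) ∂nuA else 0 := by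
  funext v
  unfold QOp
  congr 1
  refine Finset.sum_congr rfl fun i _ => Finset.sum_congr rfl fun j _ => ?_
  split_ifs with h
  · rw [interval_eq_nuA]
  · rfl

lemma QOp_nonneg (hFpos : ∀ v, 0 ≤ F v) (v : V N) : 0 ≤ QOp F v := by
  unfold QOp
  refine mul_nonneg (by positivity) (Finset.sum_nonneg fun i _ =>
    Finset.sum_nonneg fun j _ => ?_)
  split_ifs with h
  · refine mul_nonneg (by positivity) ?_
    exact intervalIntegral.integral_nonneg (by positivity) fun θ _ => hFpos _
  · exact le_refl 0

lemma QOp_summand_integrable (hFint : Integrable F) (i j : Fin N) :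
    Integrable (fun v : V N =>
      if i < j then (2 * π)⁻¹ * ∫ θ, F (collide v i j θ) ∂nuA else 0) volume := by
  by_cases h : i < j
  · simp only [if_pos h]
    exact (QA_integrable hFint h.ne).const_mul _
  · simp only [if_neg h]
    exact integrable_zero _ _ _

lemma QOp_integrable (hFint : Integrable F) : Integrable (QOp F) := by
  rw [QOp_rewrite]
  exact (integrable_finset_sum _ fun i _ => integrable_finset_sum _ fun j _ =>
    QOp_summand_integrable hFint i j).const_mul _

lemma QOp_integral (hN : 2 ≤ N) (hFint : Integrable F) (hFone : ∫ v, F v = 1) :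
    ∫ v, QOp F v = 1 := by
  rw [QOp_rewrite]
  rw [MeasureTheory.integral_const_mul,
    integral_finset_sum _ (fun i _ => integrable_finset_sum _ fun j _ =>
      QOp_summand_integrable hFint i j)]
  have h1 : ∀ i : Fin N, ∫ v : V N, (∑ j, if i < j then
      (2 * π)⁻¹ * ∫ θ, F (collide v i j θ) ∂nuA else 0)
      = ∑ j, if i < j then (1:ℝ) else 0 := by
    intro i
    rw [integral_finset_sum _ fun j _ => QOp_summand_integrable hFint i j]
    refine Finset.sum_congr rfl fun j _ => ?_
    by_cases h : i < j
    · simp only [if_pos h]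
      rw [MeasureTheory.integral_const_mul, QA_integral hFint h.ne, hFone, mul_one,
        inv_mul_cancel₀ (by positivity)]
    · simp [h]
  rw [Finset.sum_congr rfl fun i _ => h1 i, count_pairs]
  rw [inv_mul_cancel₀]
  exact_mod_cast (Nat.choose_pos hN).ne'

lemma integrable_prod_coord_mul (hFpos : ∀ v, 0 ≤ F v) (hFint : Integrable F)
    (hF2 : Integrable fun v : V N => (∑ m, v m ^ 2) * F v) (k : Fin N) {i j : Fin N}
    (hij : i ≠ j) :
    Integrable (fun p : ℝ × V N => p.2 k * F (collide p.2 i j p.1)) (nuA.prod volume) := by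
  have hG : Integrable (fun v : V N => F v + (∑ m, v m ^ 2) * F v) volume := hFint.add hF2
  have hGc := integrable_prod_collide hG hij
  have haesm : AEStronglyMeasurable (fun p : ℝ × V N => p.2 k * F (collide p.2 i j p.1))
      (nuA.prod volume) :=
    ((measurable_pi_apply k).comp measurable_snd).aestronglyMeasurable.mul
      (integrable_prod_collide hFint hij).aestronglyMeasurable
  refine hGc.mono' haesm (Filter.Eventually.of_forall fun p => ?_)
  have hb : |p.2 k| ≤ 1 + ∑ m, collide p.2 i j p.1 m ^ 2 := by
    rw [sum_sq_collide hij]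
    exact (abs_le_one_add_sq _).trans (by have := coord_sq_le_sum p.2 k; linarith)
  calc ‖p.2 k * F (collide p.2 i j p.1)‖ = |p.2 k| * F (collide p.2 i j p.1) := by
        rw [norm_mul, Real.norm_eq_abs, Real.norm_eq_abs, abs_of_nonneg (hFpos _)]
    _ ≤ (1 + ∑ m, collide p.2 i j p.1 m ^ 2) * F (collide p.2 i j p.1) :=
        mul_le_mul_of_nonneg_right hb (hFpos _)
    _ = F (collide p.2 i j p.1) + (∑ m, collide p.2 i j p.1 m ^ 2) * F (collide p.2 i j p.1) := by
        ring

lemma integral_coord_mul_collide (hFpos : ∀ v, 0 ≤ F v) (hFint : Integrable F)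
    (hFmean : ∀ k : Fin N, ∫ v : V N, v k * F v = 0)
    (hF2 : Integrable fun v : V N => (∑ m, v m ^ 2) * F v) (k : Fin N) {i j : Fin N}
    (hij : i ≠ j) (θ : ℝ) : ∫ v : V N, v k * F (collide v i j θ) = 0 := by
  have hik := integrable_coord_mul hFpos hFint hF2 i
  have hjk := integrable_coord_mul hFpos hFint hF2 j
  have hcv : ∫ v : V N, v k * F (collide v i j θ)
      = ∫ u : V N, collide u i j (-θ) k * F u := by
    rw [← (measurePreserving_collide i j hij θ).integral_comp
      (collideME i j hij θ).measurableEmbedding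
      (fun u : V N => collide u i j (-θ) k * F u)]
    refine integral_congr_ae (Filter.Eventually.of_forall fun v => ?_)
    show v k * F (collide v i j θ)
        = collide (collide v i j θ) i j (-θ) k * F (collide v i j θ)
    rw [collide_inv hij]
  rw [hcv]
  by_cases h1 : k = j
  · simp only [collide_apply hij, if_pos h1]
    have hr : ∀ u : V N, (-(u i) * Real.sin (-θ) + u j * Real.cos (-θ)) * F u
        = Real.sin θ * (u i * F u) + Real.cos θ * (u j * F u) := by
      intro u; rw [Real.sin_neg, Real.cos_neg]; ring
    simp only [hr]
    rw [integral_add (hik.const_mul _) (hjk.const_mul _), MeasureTheory.integral_const_mul,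
      MeasureTheory.integral_const_mul, hFmean i, hFmean j]
    ring
  · by_cases h2 : k = i
    · simp only [collide_apply hij, if_neg h1, if_pos h2]
      have hr : ∀ u : V N, (u i * Real.cos (-θ) + u j * Real.sin (-θ)) * F u
          = Real.cos θ * (u i * F u) + (-Real.sin θ) * (u j * F u) := by
        intro u; rw [Real.sin_neg, Real.cos_neg]; ring
      simp only [hr]
      rw [integral_add (hik.const_mul _) (hjk.const_mul _), MeasureTheory.integral_const_mul,
        MeasureTheory.integral_const_mul, hFmean i, hFmean j]
      ring
    · simp only [collide_apply hij, if_neg h1, if_neg h2]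
      exact hFmean k

lemma QA_mean_integrable (hFpos : ∀ v, 0 ≤ F v) (hFint : Integrable F)
    (hF2 : Integrable fun v : V N => (∑ m, v m ^ 2) * F v) (k : Fin N) {i j : Fin N}
    (hij : i ≠ j) :
    Integrable (fun v : V N => v k * ∫ θ, F (collide v i j θ) ∂nuA) volume := by
  have := (integrable_prod_coord_mul hFpos hFint hF2 k hij).integral_prod_right
  refine this.congr (Filter.Eventually.of_forall fun v => ?_)
  show (∫ θ : ℝ, v k * F (collide v i j θ) ∂nuA) = v k * ∫ θ, F (collide v i j θ) ∂nuA
  exact integral_const_mul' nuA (v k) fun θ => F (collide v i j θ)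

lemma QA_mean (hFpos : ∀ v, 0 ≤ F v) (hFint : Integrable F)
    (hFmean : ∀ k : Fin N, ∫ v : V N, v k * F v = 0)
    (hF2 : Integrable fun v : V N => (∑ m, v m ^ 2) * F v) (k : Fin N) {i j : Fin N}
    (hij : i ≠ j) :
    ∫ v : V N, v k * ∫ θ, F (collide v i j θ) ∂nuA = 0 := by
  have hpull : ∀ v : V N, v k * (∫ θ, F (collide v i j θ) ∂nuA)
      = ∫ θ, v k * F (collide v i j θ) ∂nuA :=
    fun v => (integral_const_mul' nuA (v k) fun θ => F (collide v i j θ)).symm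
  simp only [hpull]
  have hint2 : Integrable (Function.uncurry fun (θ : ℝ) (v : V N) =>
      v k * F (collide v i j θ)) (nuA.prod volume) :=
    integrable_prod_coord_mul hFpos hFint hF2 k hij
  rw [← MeasureTheory.integral_integral_swap hint2]
  have hz : ∀ θ : ℝ, ∫ v : V N, v k * F (collide v i j θ) = 0 :=
    fun θ => integral_coord_mul_collide hFpos hFint hFmean hF2 k hij θ
  simp only [hz]
  simp

lemma QOp_mean (hFpos : ∀ v, 0 ≤ F v) (hFint : Integrable F)
    (hFmean : ∀ k : Fin N, ∫ v : V N, v k * F v = 0)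
    (hF2 : Integrable fun v : V N => (∑ m, v m ^ 2) * F v) (k : Fin N) :
    ∫ v : V N, v k * QOp F v = 0 := by
  rw [QOp_rewrite]
  have hexp : (fun v : V N => v k * ((N.choose 2 : ℝ)⁻¹ * ∑ i, ∑ j,
      if i < j then (2 * π)⁻¹ * ∫ θ, F (collide v i j θ) ∂nuA else 0))
      = fun v => (N.choose 2 : ℝ)⁻¹ * ∑ i, ∑ j,
        if i < j then (2 * π)⁻¹ * (v k * ∫ θ, F (collide v i j θ) ∂nuA) else 0 := by
    funext v
    rw [mul_left_comm]
    congr 1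
    rw [Finset.mul_sum]
    refine Finset.sum_congr rfl fun i _ => ?_
    rw [Finset.mul_sum]
    refine Finset.sum_congr rfl fun j _ => ?_
    split_ifs with h
    · ring
    · exact mul_zero _
  have hsummand : ∀ i j : Fin N, Integrable (fun v : V N =>
      if i < j then (2 * π)⁻¹ * (v k * ∫ θ, F (collide v i j θ) ∂nuA) else 0) volume := by
    intro i j
    by_cases h : i < j
    · simp only [if_pos h]
      exact (QA_mean_integrable hFpos hFint hF2 k h.ne).const_mul _
    · simp only [if_neg h]
      exact integrable_zero _ _ _
  rw [hexp, MeasureTheory.integral_const_mul,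
    integral_finset_sum _ (fun i _ => integrable_finset_sum _ fun j _ => hsummand i j)]
  have h1 : ∀ i : Fin N, ∫ v : V N, (∑ j, if i < j then
      (2 * π)⁻¹ * (v k * ∫ θ, F (collide v i j θ) ∂nuA) else 0) = 0 := by
    intro i
    rw [integral_finset_sum _ fun j _ => hsummand i j]
    refine Finset.sum_eq_zero fun j _ => ?_
    by_cases h : i < j
    · simp only [if_pos h]
      rw [MeasureTheory.integral_const_mul, QA_mean hFpos hFint hFmean hF2 k h.ne, mul_zero]
    · simp [h]
  rw [Finset.sum_congr rfl fun i _ => h1 i]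
  simp

lemma QOp_moment (hFint : Integrable F)
    (hF2 : Integrable fun v : V N => (∑ m, v m ^ 2) * F v) :
    Integrable (fun v : V N => (∑ m, v m ^ 2) * QOp F v) volume := by
  have hexp : (fun v : V N => (∑ m, v m ^ 2) * QOp F v)
      = fun v => (N.choose 2 : ℝ)⁻¹ * ∑ i, ∑ j,
        if i < j then (2 * π)⁻¹ *
          ∫ θ, (fun u : V N => (∑ m, u m ^ 2) * F u) (collide v i j θ) ∂nuA else 0 := by
    rw [QOp_rewrite]
    funext v
    rw [mul_left_comm]
    congr 1
    rw [Finset.mul_sum]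
    refine Finset.sum_congr rfl fun i _ => ?_
    rw [Finset.mul_sum]
    refine Finset.sum_congr rfl fun j _ => ?_
    split_ifs with h
    · rw [mul_left_comm]
      congr 1
      rw [← MeasureTheory.integral_const_mul]
      refine integral_congr_ae (Filter.Eventually.of_forall fun θ => ?_)
      simp only
      rw [sum_sq_collide h.ne]
    · exact mul_zero _
  rw [hexp]
  refine Integrable.const_mul (integrable_finset_sum _ fun i _ =>
    integrable_finset_sum _ fun j _ => ?_) _
  by_cases h : i < j
  · simp only [if_pos h]
    exact (QA_integrable hF2 h.ne).const_mul _
  · simp only [if_neg h]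
    exact integrable_zero _ _ _

end QLemmas


section RLemmas

/-- Splitting off the first coordinate. -/
def e2 (N : ℕ) : V (N + 1) ≃ᵐ (ℝ × V N) :=
  MeasurableEquiv.piFinSuccAbove (fun _ : Fin (N + 1) => ℝ) 0

lemma e2_fst (u : V (N + 1)) : (e2 N u).1 = u 0 := rfl

lemma e2_snd (u : V (N + 1)) (k : Fin N) : (e2 N u).2 k = u k.succ := by
  show u ((0 : Fin (N + 1)).succAbove k) = u k.succ
  rw [Fin.zero_succAbove]

lemma e2_symm_zero (p : ℝ × V N) : (e2 N).symm p 0 = p.1 := by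
  have h := (e2 N).apply_symm_apply p
  calc (e2 N).symm p 0 = (e2 N ((e2 N).symm p)).1 := (e2_fst _).symm
    _ = p.1 := by rw [h]

lemma e2_symm_succ (p : ℝ × V N) (k : Fin N) : (e2 N).symm p k.succ = p.2 k := by
  have h := (e2 N).apply_symm_apply p
  calc (e2 N).symm p k.succ = (e2 N ((e2 N).symm p)).2 k := (e2_snd _ k).symm
    _ = p.2 k := by rw [h]

lemma measurePreserving_e2 : MeasurePreserving (e2 N) volume volume :=
  volume_preserving_piFinSuccAbove (fun _ : Fin (N + 1) => ℝ) 0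

lemma succ_ne_zero' (j : Fin N) : (0 : Fin (N + 1)) ≠ j.succ := (Fin.succ_ne_zero j).symm

/-- The reservoir rotation acting on `ℝ × ℝ^N`. -/
def rconj (j : Fin N) (θ : ℝ) : ℝ × V N → ℝ × V N := fun p =>
  (p.1 * Real.cos θ - p.2 j * Real.sin θ,
    Function.update p.2 j (p.2 j * Real.cos θ + p.1 * Real.sin θ))

lemma rconj_eq (j : Fin N) (θ : ℝ) :
    rconj j θ = ⇑(e2 N) ∘ (fun u : V (N + 1) => collide u 0 j.succ (-θ)) ∘ ⇑(e2 N).symm := by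
  funext p
  have h0j := succ_ne_zero' j
  refine Prod.ext ?_ (funext fun k => ?_)
  · show p.1 * Real.cos θ - p.2 j * Real.sin θ
        = collide ((e2 N).symm p) 0 j.succ (-θ) 0
    rw [collide_apply h0j, if_neg h0j, if_pos rfl, e2_symm_zero, e2_symm_succ,
      Real.cos_neg, Real.sin_neg]
    ring
  · show Function.update p.2 j (p.2 j * Real.cos θ + p.1 * Real.sin θ) k
        = (e2 N (collide ((e2 N).symm p) 0 j.succ (-θ))).2 k
    rw [e2_snd, collide_apply h0j, Function.update_apply]
    by_cases h : k = j
    · rw [if_pos h, if_pos (show k.succ = j.succ by rw [h]), e2_symm_zero, e2_symm_succ,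
        Real.cos_neg, Real.sin_neg]
      ring
    · rw [if_neg h, if_neg (fun hc => h (Fin.succ_injective _ hc)),
        if_neg (Fin.succ_ne_zero k), e2_symm_succ]

lemma rconj_rconj (j : Fin N) (θ φ : ℝ) (p : ℝ × V N) :
    rconj j φ (rconj j θ p) = rconj j (θ + φ) p := by
  have h0j := succ_ne_zero' j
  simp only [rconj_eq, Function.comp_apply, MeasurableEquiv.symm_apply_apply]
  rw [collide_collide h0j, show -θ + -φ = -(θ + φ) by ring]

lemma rconj_zero (j : Fin N) (p : ℝ × V N) : rconj j 0 p = p := by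
  simp [rconj, Function.update_eq_self]

lemma rconj_inv (j : Fin N) (θ : ℝ) (p : ℝ × V N) :
    rconj j (-θ) (rconj j θ p) = p := by
  rw [rconj_rconj, add_neg_cancel, rconj_zero]

lemma rconj_energy (j : Fin N) (θ : ℝ) (p : ℝ × V N) :
    (rconj j θ p).1 ^ 2 + ∑ k, (rconj j θ p).2 k ^ 2 = p.1 ^ 2 + ∑ k, p.2 k ^ 2 := by
  have h0j := succ_ne_zero' j
  rw [rconj_eq]
  show (e2 N (collide ((e2 N).symm p) 0 j.succ (-θ))).1 ^ 2
      + ∑ k, (e2 N (collide ((e2 N).symm p) 0 j.succ (-θ))).2 k ^ 2 = _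
  have hA : ∀ k : Fin N, (e2 N (collide ((e2 N).symm p) 0 j.succ (-θ))).2 k ^ 2
      = collide ((e2 N).symm p) 0 j.succ (-θ) k.succ ^ 2 := fun k => by rw [e2_snd]
  have hB : ∀ k : Fin N, (e2 N).symm p k.succ ^ 2 = p.2 k ^ 2 := fun k => by
    rw [e2_symm_succ]
  have h1 := Fin.sum_univ_succ
    (fun m : Fin (N + 1) => collide ((e2 N).symm p) 0 j.succ (-θ) m ^ 2)
  have h2 := Fin.sum_univ_succ (fun m : Fin (N + 1) => (e2 N).symm p m ^ 2)
  rw [e2_fst, Finset.sum_congr rfl fun k _ => hA k, ← h1, sum_sq_collide h0j, h2,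
    e2_symm_zero, Finset.sum_congr rfl fun k _ => hB k]

lemma measurePreserving_rconj (j : Fin N) (θ : ℝ) :
    MeasurePreserving (rconj j θ) volume volume := by
  rw [rconj_eq]
  exact measurePreserving_e2.comp
    ((measurePreserving_collide 0 j.succ (succ_ne_zero' j) (-θ)).comp
      (measurePreserving_e2.symm (e2 N)))

/-- The reservoir rotation as a measurable equivalence. -/
def rconjME (j : Fin N) (θ : ℝ) : (ℝ × V N) ≃ᵐ (ℝ × V N) where
  toEquiv :=
    { toFun := rconj j θ
      invFun := rconj j (-θ)
      left_inv := fun p => rconj_inv j θ p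
      right_inv := fun p => by rw [rconj_rconj, neg_add_cancel, rconj_zero] }
  measurable_toFun := (measurePreserving_rconj j θ).measurable
  measurable_invFun := (measurePreserving_rconj j (-θ)).measurable

lemma measurable_rconj_uncurry (j : Fin N) :
    Measurable (Function.uncurry fun (θ : ℝ) (p : ℝ × V N) => rconj j θ p) := by
  show Measurable fun q : ℝ × (ℝ × V N) => rconj j q.1 q.2
  unfold rconj
  refine Measurable.prodMk (by fun_prop) ?_
  apply measurable_pi_lambda
  intro k
  have hrw : (fun q : ℝ × (ℝ × V N) =>
      Function.update q.2.2 j (q.2.2 j * Real.cos q.1 + q.2.1 * Real.sin q.1) k)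
      = fun q : ℝ × (ℝ × V N) => if k = j
        then q.2.2 j * Real.cos q.1 + q.2.1 * Real.sin q.1 else q.2.2 k := by
    funext q
    rw [Function.update_apply]
  rw [hrw]
  split_ifs <;> fun_prop

lemma measurePreserving_RSkew (j : Fin N) :
    MeasurePreserving (fun q : ℝ × (ℝ × V N) => (q.1, rconj j q.1 q.2))
      (nuA.prod volume) (nuA.prod volume) :=
  (MeasurePreserving.id nuA).skew_product (measurable_rconj_uncurry j)
    (Filter.Eventually.of_forall fun θ => (measurePreserving_rconj j θ).map_eq)

/-- The skew product of the reservoir rotations as a measurable equivalence. -/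
def RSkewME (j : Fin N) : (ℝ × (ℝ × V N)) ≃ᵐ (ℝ × (ℝ × V N)) where
  toEquiv :=
    { toFun := fun q => (q.1, rconj j q.1 q.2)
      invFun := fun q => (q.1, rconj j (-q.1) q.2)
      left_inv := fun q => by
        show (q.1, rconj j (-q.1) (rconj j q.1 q.2)) = q
        rw [rconj_inv]
      right_inv := fun q => by
        show (q.1, rconj j q.1 (rconj j (-q.1) q.2)) = q
        rw [rconj_rconj, neg_add_cancel, rconj_zero] }
  measurable_toFun := by
    show Measurable fun q : ℝ × (ℝ × V N) => (q.1, rconj j q.1 q.2)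
    exact measurable_fst.prodMk (measurable_rconj_uncurry j)
  measurable_invFun := by
    show Measurable fun q : ℝ × (ℝ × V N) => (q.1, rconj j (-q.1) q.2)
    refine measurable_fst.prodMk ?_
    have h1 : (fun q : ℝ × (ℝ × V N) => rconj j (-q.1) q.2)
        = (Function.uncurry fun (θ : ℝ) (p : ℝ × V N) => rconj j θ p)
          ∘ (fun q : ℝ × (ℝ × V N) => (-q.1, q.2)) := rfl
    rw [h1]
    exact (measurable_rconj_uncurry j).comp (measurable_fst.neg.prodMk measurable_snd)

lemma integrable_skew_rconj {G : ℝ × V N → ℝ} (hG : Integrable G volume) (j : Fin N) :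
    Integrable (fun q : ℝ × (ℝ × V N) => G (rconj j q.1 q.2)) (nuA.prod volume) := by
  have h1 : Integrable (fun q : ℝ × (ℝ × V N) => G q.2) (nuA.prod volume) := by
    have := (integrable_const (μ := nuA) (1:ℝ)).mul_prod hG
    simpa using this
  exact ((measurePreserving_RSkew j).integrable_comp_emb
    (RSkewME j).measurableEmbedding).2 h1

lemma RA_integrable {G : ℝ × V N → ℝ} (hG : Integrable G volume) (j : Fin N) :
    Integrable (fun p : ℝ × V N => ∫ θ, G (rconj j θ p) ∂nuA) volume :=
  (integrable_skew_rconj hG j).integral_prod_right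

lemma RA_integral {G : ℝ × V N → ℝ} (hG : Integrable G volume) (j : Fin N) :
    ∫ p : ℝ × V N, (∫ θ, G (rconj j θ p) ∂nuA) = (2 * π) * ∫ p, G p := by
  have hint : Integrable (Function.uncurry fun (θ : ℝ) (p : ℝ × V N) => G (rconj j θ p))
      (nuA.prod volume) := integrable_skew_rconj hG j
  rw [← MeasureTheory.integral_integral_swap hint]
  have h2 : ∀ θ : ℝ, ∫ p : ℝ × V N, G (rconj j θ p) = ∫ p, G p := fun θ =>
    (measurePreserving_rconj j θ).integral_comp (rconjME j θ).measurableEmbedding G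
  simp only [h2]
  exact integral_const_nuA _

end RLemmas


section ROpLemmas

variable {g : ℝ → ℝ} {F : V N → ℝ}

lemma ROp_pt (g : ℝ → ℝ) (j : Fin N) (F : V N → ℝ) (v : V N) :
    ROp g j F v = ∫ w : ℝ,
      ((2 * π)⁻¹ * ∫ θ, g ((rconj j θ (w, v)).1) * F ((rconj j θ (w, v)).2) ∂nuA) := by
  unfold ROp
  refine integral_congr_ae (Filter.Eventually.of_forall fun w => ?_)
  show (2 * π)⁻¹ * (∫ θ in (0:ℝ)..(2 * π),
      g (w * Real.cos θ - v j * Real.sin θ)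
        * F (Function.update v j (v j * Real.cos θ + w * Real.sin θ)))
    = (2 * π)⁻¹ * ∫ θ, g ((rconj j θ (w, v)).1) * F ((rconj j θ (w, v)).2) ∂nuA
  rw [interval_eq_nuA]
  rfl

lemma ROp_nonneg (hgpos : ∀ x, 0 ≤ g x) (hFpos : ∀ v, 0 ≤ F v) (j : Fin N) (v : V N) :
    0 ≤ ROp g j F v := by
  unfold ROp
  refine integral_nonneg fun w => ?_
  exact mul_nonneg (by positivity)
    (intervalIntegral.integral_nonneg (by positivity) fun θ _ =>
      mul_nonneg (hgpos _) (hFpos _))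

lemma G0_integrable (hg : Integrable g) (hF : Integrable F) :
    Integrable (fun p : ℝ × V N => g p.1 * F p.2) volume := by
  rw [Measure.volume_eq_prod]
  exact hg.mul_prod hF

lemma Psi_integrable (hg : Integrable g) (hF : Integrable F) (j : Fin N) :
    Integrable (fun p : ℝ × V N =>
      (2 * π)⁻¹ * ∫ θ, g ((rconj j θ p).1) * F ((rconj j θ p).2) ∂nuA) volume :=
  (RA_integrable (G := fun p : ℝ × V N => g p.1 * F p.2) (G0_integrable hg hF) j).const_mul _

lemma ROp_integrable (hg : Integrable g) (hF : Integrable F) (j : Fin N) :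
    Integrable (ROp g j F) volume := by
  have h1 : Integrable (fun p : ℝ × V N =>
      (2 * π)⁻¹ * ∫ θ, g ((rconj j θ p).1) * F ((rconj j θ p).2) ∂nuA)
      ((volume : Measure ℝ).prod (volume : Measure (V N))) := by
    rw [← Measure.volume_eq_prod]
    exact Psi_integrable hg hF j
  exact h1.integral_prod_right.congr
    (Filter.Eventually.of_forall fun v => (ROp_pt g j F v).symm)

lemma ROp_integral (hg : Integrable g) (hgone : ∫ x, g x = 1) (hF : Integrable F)
    (hFone : ∫ v, F v = 1) (j : Fin N) : ∫ v, ROp g j F v = 1 := by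
  have hG0 := G0_integrable hg hF
  have hΨu : Integrable (Function.uncurry fun (w : ℝ) (v : V N) =>
      (2 * π)⁻¹ * ∫ θ, g ((rconj j θ (w, v)).1) * F ((rconj j θ (w, v)).2) ∂nuA)
      ((volume : Measure ℝ).prod volume) := by
    rw [← Measure.volume_eq_prod]
    exact Psi_integrable hg hF j
  calc ∫ v, ROp g j F v
      = ∫ v : V N, ∫ w : ℝ,
          ((2 * π)⁻¹ * ∫ θ, g ((rconj j θ (w, v)).1) * F ((rconj j θ (w, v)).2) ∂nuA) :=
        integral_congr_ae (Filter.Eventually.of_forall fun v => ROp_pt g j F v)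
    _ = ∫ w : ℝ, ∫ v : V N,
          ((2 * π)⁻¹ * ∫ θ, g ((rconj j θ (w, v)).1) * F ((rconj j θ (w, v)).2) ∂nuA) :=
        (MeasureTheory.integral_integral_swap hΨu).symm
    _ = ∫ p : ℝ × V N, ((2 * π)⁻¹ * ∫ θ, g ((rconj j θ (p.1, p.2)).1)
          * F ((rconj j θ (p.1, p.2)).2) ∂nuA) ∂((volume : Measure ℝ).prod volume) :=
        MeasureTheory.integral_integral hΨu
    _ = ∫ p : ℝ × V N, ((2 * π)⁻¹ * ∫ θ, g ((rconj j θ p).1) * F ((rconj j θ p).2) ∂nuA) := by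
        rw [← Measure.volume_eq_prod]
    _ = (2 * π)⁻¹ * ∫ p : ℝ × V N, (∫ θ, g ((rconj j θ p).1) * F ((rconj j θ p).2) ∂nuA) :=
        integral_const_mul' volume _ _
    _ = (2 * π)⁻¹ * ((2 * π) * ∫ p : ℝ × V N, g p.1 * F p.2) := by
        rw [RA_integral (G := fun p : ℝ × V N => g p.1 * F p.2) hG0 j]
    _ = (2 * π)⁻¹ * ((2 * π) * ((∫ x, g x) * ∫ v, F v)) := by
        have he := MeasureTheory.integral_prod_mul (μ := (volume : Measure ℝ))
          (ν := (volume : Measure (V N))) (f := g) (g := F)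
        rw [Measure.volume_eq_prod, he]
    _ = 1 := by
        rw [hgone, hFone]
        field_simp

lemma GG_integrable (hg : Integrable g) (hg2 : Integrable fun x => x ^ 2 * g x)
    (hF : Integrable F) (hF2 : Integrable fun v : V N => (∑ m, v m ^ 2) * F v) :
    Integrable (fun p : ℝ × V N =>
      (1 + p.1 ^ 2 + ∑ m, p.2 m ^ 2) * (g p.1 * F p.2)) volume := by
  have h1 : Integrable (fun p : ℝ × V N => g p.1 * F p.2) volume := G0_integrable hg hF
  have h2 : Integrable (fun p : ℝ × V N => (p.1 ^ 2 * g p.1) * F p.2) volume := by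
    rw [Measure.volume_eq_prod]
    exact hg2.mul_prod hF
  have h3 : Integrable (fun p : ℝ × V N => g p.1 * ((∑ m, p.2 m ^ 2) * F p.2)) volume := by
    rw [Measure.volume_eq_prod]
    exact hg.mul_prod hF2
  refine ((h1.add h2).add h3).congr (Filter.Eventually.of_forall fun p => ?_)
  simp only [Pi.add_apply]
  ring

lemma integrable_skew_coord_mul (hgpos : ∀ x, 0 ≤ g x) (hg : Integrable g)
    (hg2 : Integrable fun x => x ^ 2 * g x) (hFpos : ∀ v, 0 ≤ F v) (hF : Integrable F)
    (hF2 : Integrable fun v : V N => (∑ m, v m ^ 2) * F v) (k j : Fin N) :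
    Integrable (Function.uncurry fun (θ : ℝ) (p : ℝ × V N) =>
      p.2 k * (g ((rconj j θ p).1) * F ((rconj j θ p).2))) (nuA.prod volume) := by
  have hGGs := integrable_skew_rconj (GG_integrable hg hg2 hF hF2) j
  have hG0s := integrable_skew_rconj (G0_integrable hg hF) j
  have haesm : AEStronglyMeasurable (Function.uncurry fun (θ : ℝ) (p : ℝ × V N) =>
      p.2 k * (g ((rconj j θ p).1) * F ((rconj j θ p).2))) (nuA.prod volume) :=
    ((measurable_pi_apply k).comp (measurable_snd.comp measurable_snd)).aestronglyMeasurable.mul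
      hG0s.aestronglyMeasurable
  refine hGGs.mono' haesm (Filter.Eventually.of_forall fun q => ?_)
  show ‖q.2.2 k * (g ((rconj j q.1 q.2).1) * F ((rconj j q.1 q.2).2))‖
      ≤ (1 + (rconj j q.1 q.2).1 ^ 2 + ∑ m, (rconj j q.1 q.2).2 m ^ 2)
        * (g ((rconj j q.1 q.2).1) * F ((rconj j q.1 q.2).2))
  have hen := rconj_energy j q.1 q.2
  have hb : |q.2.2 k| ≤ 1 + (rconj j q.1 q.2).1 ^ 2 + ∑ m, (rconj j q.1 q.2).2 m ^ 2 := by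
    have h1 := coord_sq_le_sum q.2.2 k
    have h2 := abs_le_one_add_sq (q.2.2 k)
    nlinarith [sq_nonneg q.2.1]
  have hnn : 0 ≤ g ((rconj j q.1 q.2).1) * F ((rconj j q.1 q.2).2) :=
    mul_nonneg (hgpos _) (hFpos _)
  calc ‖q.2.2 k * (g ((rconj j q.1 q.2).1) * F ((rconj j q.1 q.2).2))‖
      = |q.2.2 k| * (g ((rconj j q.1 q.2).1) * F ((rconj j q.1 q.2).2)) := by
        rw [norm_mul, Real.norm_eq_abs, Real.norm_eq_abs, abs_of_nonneg hnn]
    _ ≤ (1 + (rconj j q.1 q.2).1 ^ 2 + ∑ m, (rconj j q.1 q.2).2 m ^ 2)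
        * (g ((rconj j q.1 q.2).1) * F ((rconj j q.1 q.2).2)) :=
        mul_le_mul_of_nonneg_right hb hnn

lemma integrable_skew_sumsq_mul (hgpos : ∀ x, 0 ≤ g x) (hg : Integrable g)
    (hg2 : Integrable fun x => x ^ 2 * g x) (hFpos : ∀ v, 0 ≤ F v) (hF : Integrable F)
    (hF2 : Integrable fun v : V N => (∑ m, v m ^ 2) * F v) (j : Fin N) :
    Integrable (Function.uncurry fun (θ : ℝ) (p : ℝ × V N) =>
      (∑ m, p.2 m ^ 2) * (g ((rconj j θ p).1) * F ((rconj j θ p).2))) (nuA.prod volume) := by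
  have hGGs := integrable_skew_rconj (GG_integrable hg hg2 hF hF2) j
  have hG0s := integrable_skew_rconj (G0_integrable hg hF) j
  have haesm : AEStronglyMeasurable (Function.uncurry fun (θ : ℝ) (p : ℝ × V N) =>
      (∑ m, p.2 m ^ 2) * (g ((rconj j θ p).1) * F ((rconj j θ p).2))) (nuA.prod volume) := by
    have hm : Measurable fun q : ℝ × (ℝ × V N) => ∑ m, q.2.2 m ^ 2 := by fun_prop
    exact hm.aestronglyMeasurable.mul hG0s.aestronglyMeasurable
  refine hGGs.mono' haesm (Filter.Eventually.of_forall fun q => ?_)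
  show ‖(∑ m, q.2.2 m ^ 2) * (g ((rconj j q.1 q.2).1) * F ((rconj j q.1 q.2).2))‖
      ≤ (1 + (rconj j q.1 q.2).1 ^ 2 + ∑ m, (rconj j q.1 q.2).2 m ^ 2)
        * (g ((rconj j q.1 q.2).1) * F ((rconj j q.1 q.2).2))
  have hen := rconj_energy j q.1 q.2
  have hsq : 0 ≤ ∑ m, q.2.2 m ^ 2 := Finset.sum_nonneg fun m _ => sq_nonneg _
  have hb : |∑ m, q.2.2 m ^ 2|
      ≤ 1 + (rconj j q.1 q.2).1 ^ 2 + ∑ m, (rconj j q.1 q.2).2 m ^ 2 := by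
    rw [abs_of_nonneg hsq]
    nlinarith [sq_nonneg q.2.1]
  have hnn : 0 ≤ g ((rconj j q.1 q.2).1) * F ((rconj j q.1 q.2).2) :=
    mul_nonneg (hgpos _) (hFpos _)
  calc ‖(∑ m, q.2.2 m ^ 2) * (g ((rconj j q.1 q.2).1) * F ((rconj j q.1 q.2).2))‖
      = |∑ m, q.2.2 m ^ 2| * (g ((rconj j q.1 q.2).1) * F ((rconj j q.1 q.2).2)) := by
        rw [norm_mul, Real.norm_eq_abs, Real.norm_eq_abs, abs_of_nonneg hnn]
    _ ≤ (1 + (rconj j q.1 q.2).1 ^ 2 + ∑ m, (rconj j q.1 q.2).2 m ^ 2)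
        * (g ((rconj j q.1 q.2).1) * F ((rconj j q.1 q.2).2)) :=
        mul_le_mul_of_nonneg_right hb hnn

lemma integral_coord_mul_rconj (hg : Integrable g)
    (hg1 : Integrable fun x => x * g x) (hgmean : ∫ x, x * g x = 0)
    (hFpos : ∀ v, 0 ≤ F v) (hF : Integrable F)
    (hFmean : ∀ k : Fin N, ∫ v : V N, v k * F v = 0)
    (hF2 : Integrable fun v : V N => (∑ m, v m ^ 2) * F v) (k j : Fin N) (θ : ℝ) :
    ∫ p : ℝ × V N, p.2 k * (g ((rconj j θ p).1) * F ((rconj j θ p).2)) = 0 := by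
  have hcv : ∫ p : ℝ × V N, p.2 k * (g ((rconj j θ p).1) * F ((rconj j θ p).2))
      = ∫ q : ℝ × V N, (rconj j (-θ) q).2 k * (g q.1 * F q.2) := by
    rw [← (measurePreserving_rconj j θ).integral_comp (rconjME j θ).measurableEmbedding
      (fun q : ℝ × V N => (rconj j (-θ) q).2 k * (g q.1 * F q.2))]
    refine integral_congr_ae (Filter.Eventually.of_forall fun p => ?_)
    show p.2 k * (g ((rconj j θ p).1) * F ((rconj j θ p).2))
        = (rconj j (-θ) (rconj j θ p)).2 k * (g ((rconj j θ p).1) * F ((rconj j θ p).2))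
    rw [rconj_inv]
  rw [hcv]
  by_cases h : k = j
  · have hr : ∀ q : ℝ × V N, (rconj j (-θ) q).2 k * (g q.1 * F q.2)
        = Real.cos θ * (g q.1 * (q.2 j * F q.2)) + (-Real.sin θ) * ((q.1 * g q.1) * F q.2) := by
      intro q
      show Function.update q.2 j (q.2 j * Real.cos (-θ) + q.1 * Real.sin (-θ)) k
        * (g q.1 * F q.2) = _
      rw [Function.update_apply, if_pos h, Real.cos_neg, Real.sin_neg]
      ring
    simp only [hr]
    have hb1 : Integrable (fun q : ℝ × V N => g q.1 * (q.2 j * F q.2)) volume := by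
      rw [Measure.volume_eq_prod]
      exact hg.mul_prod (integrable_coord_mul hFpos hF hF2 j)
    have hb2 : Integrable (fun q : ℝ × V N => (q.1 * g q.1) * F q.2) volume := by
      rw [Measure.volume_eq_prod]
      exact hg1.mul_prod hF
    rw [integral_add (hb1.const_mul _) (hb2.const_mul _), integral_const_mul' volume _ _,
      integral_const_mul' volume _ _]
    have e1 : ∫ q : ℝ × V N, g q.1 * (q.2 j * F q.2) = 0 := by
      have he := MeasureTheory.integral_prod_mul (μ := (volume : Measure ℝ))
        (ν := (volume : Measure (V N))) (f := g) (g := fun y : V N => y j * F y)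
      rw [Measure.volume_eq_prod, he, hFmean j, mul_zero]
    have e2 : ∫ q : ℝ × V N, (q.1 * g q.1) * F q.2 = 0 := by
      have he := MeasureTheory.integral_prod_mul (μ := (volume : Measure ℝ))
        (ν := (volume : Measure (V N))) (f := fun x : ℝ => x * g x) (g := F)
      rw [Measure.volume_eq_prod, he, hgmean, zero_mul]
    rw [e1, e2]
    ring
  · have hr : ∀ q : ℝ × V N, (rconj j (-θ) q).2 k * (g q.1 * F q.2)
        = g q.1 * (q.2 k * F q.2) := by
      intro q
      show Function.update q.2 j (q.2 j * Real.cos (-θ) + q.1 * Real.sin (-θ)) k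
        * (g q.1 * F q.2) = _
      rw [Function.update_apply, if_neg h]
      ring
    simp only [hr]
    have he := MeasureTheory.integral_prod_mul (μ := (volume : Measure ℝ))
      (ν := (volume : Measure (V N))) (f := g) (g := fun y : V N => y k * F y)
    rw [Measure.volume_eq_prod, he, hFmean k, mul_zero]

lemma ROp_mean (hgpos : ∀ x, 0 ≤ g x) (hg : Integrable g)
    (hg1 : Integrable fun x => x * g x) (hgmean : ∫ x, x * g x = 0)
    (hg2 : Integrable fun x => x ^ 2 * g x)
    (hFpos : ∀ v, 0 ≤ F v) (hF : Integrable F)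
    (hFmean : ∀ k : Fin N, ∫ v : V N, v k * F v = 0)
    (hF2 : Integrable fun v : V N => (∑ m, v m ^ 2) * F v) (k j : Fin N) :
    ∫ v : V N, v k * ROp g j F v = 0 := by
  have hjoint : Integrable (Function.uncurry fun (θ : ℝ) (p : ℝ × V N) =>
      p.2 k * (g ((rconj j θ p).1) * F ((rconj j θ p).2))) (nuA.prod volume) :=
    integrable_skew_coord_mul hgpos hg hg2 hFpos hF hF2 k j
  have hΨk : Integrable (Function.uncurry fun (w : ℝ) (v : V N) =>
      (2 * π)⁻¹ * ∫ θ, (w, v).2 k * (g ((rconj j θ (w, v)).1) * F ((rconj j θ (w, v)).2)) ∂nuA)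
      ((volume : Measure ℝ).prod volume) := by
    rw [← Measure.volume_eq_prod]
    exact hjoint.integral_prod_right.const_mul _
  have hpt : ∀ v : V N, v k * ROp g j F v
      = ∫ w : ℝ, ((2 * π)⁻¹
        * ∫ θ, (w, v).2 k * (g ((rconj j θ (w, v)).1) * F ((rconj j θ (w, v)).2)) ∂nuA) := by
    intro v
    rw [ROp_pt g j F v, ← integral_const_mul' volume (v k) _]
    refine integral_congr_ae (Filter.Eventually.of_forall fun w => ?_)
    show v k * ((2 * π)⁻¹ * ∫ θ, g ((rconj j θ (w, v)).1) * F ((rconj j θ (w, v)).2) ∂nuA)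
        = (2 * π)⁻¹ * ∫ θ, (w, v).2 k
          * (g ((rconj j θ (w, v)).1) * F ((rconj j θ (w, v)).2)) ∂nuA
    rw [mul_left_comm]
    congr 1
    exact (integral_const_mul' nuA (v k) _).symm
  calc ∫ v : V N, v k * ROp g j F v
      = ∫ v : V N, ∫ w : ℝ, ((2 * π)⁻¹
          * ∫ θ, (w, v).2 k * (g ((rconj j θ (w, v)).1) * F ((rconj j θ (w, v)).2)) ∂nuA) :=
        integral_congr_ae (Filter.Eventually.of_forall hpt)
    _ = ∫ w : ℝ, ∫ v : V N, ((2 * π)⁻¹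
          * ∫ θ, (w, v).2 k * (g ((rconj j θ (w, v)).1) * F ((rconj j θ (w, v)).2)) ∂nuA) :=
        (MeasureTheory.integral_integral_swap hΨk).symm
    _ = ∫ p : ℝ × V N, ((2 * π)⁻¹ * ∫ θ, (p.1, p.2).2 k
          * (g ((rconj j θ (p.1, p.2)).1) * F ((rconj j θ (p.1, p.2)).2)) ∂nuA)
          ∂((volume : Measure ℝ).prod volume) :=
        MeasureTheory.integral_integral hΨk
    _ = ∫ p : ℝ × V N, ((2 * π)⁻¹
          * ∫ θ, p.2 k * (g ((rconj j θ p).1) * F ((rconj j θ p).2)) ∂nuA) := by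
        rw [← Measure.volume_eq_prod]
    _ = (2 * π)⁻¹ * ∫ p : ℝ × V N,
          (∫ θ, p.2 k * (g ((rconj j θ p).1) * F ((rconj j θ p).2)) ∂nuA) :=
        integral_const_mul' volume _ _
    _ = (2 * π)⁻¹ * ∫ θ,
          (∫ p : ℝ × V N, p.2 k * (g ((rconj j θ p).1) * F ((rconj j θ p).2))) ∂nuA := by
        rw [← MeasureTheory.integral_integral_swap hjoint]
    _ = 0 := by
        have hz : ∀ θ : ℝ, ∫ p : ℝ × V N,
            p.2 k * (g ((rconj j θ p).1) * F ((rconj j θ p).2)) = 0 := fun θ =>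
          integral_coord_mul_rconj hg hg1 hgmean hFpos hF hFmean hF2 k j θ
        simp only [hz]
        simp

lemma ROp_moment (hgpos : ∀ x, 0 ≤ g x) (hg : Integrable g)
    (hg2 : Integrable fun x => x ^ 2 * g x)
    (hFpos : ∀ v, 0 ≤ F v) (hF : Integrable F)
    (hF2 : Integrable fun v : V N => (∑ m, v m ^ 2) * F v) (j : Fin N) :
    Integrable (fun v : V N => (∑ m, v m ^ 2) * ROp g j F v) volume := by
  have hjoint := integrable_skew_sumsq_mul hgpos hg hg2 hFpos hF hF2 j
  have hΨ2 : Integrable (fun p : ℝ × V N =>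
      (2 * π)⁻¹ * ∫ θ, (∑ m, p.2 m ^ 2)
        * (g ((rconj j θ p).1) * F ((rconj j θ p).2)) ∂nuA)
      ((volume : Measure ℝ).prod volume) := by
    rw [← Measure.volume_eq_prod]
    exact hjoint.integral_prod_right.const_mul _
  have hpt : ∀ v : V N, (∑ m, v m ^ 2) * ROp g j F v
      = ∫ w : ℝ, ((2 * π)⁻¹ * ∫ θ, (∑ m, (w, v).2 m ^ 2)
          * (g ((rconj j θ (w, v)).1) * F ((rconj j θ (w, v)).2)) ∂nuA) := by
    intro v
    rw [ROp_pt g j F v, ← integral_const_mul' volume (∑ m, v m ^ 2) _]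
    refine integral_congr_ae (Filter.Eventually.of_forall fun w => ?_)
    show (∑ m, v m ^ 2)
          * ((2 * π)⁻¹ * ∫ θ, g ((rconj j θ (w, v)).1) * F ((rconj j θ (w, v)).2) ∂nuA)
        = (2 * π)⁻¹ * ∫ θ, (∑ m, (w, v).2 m ^ 2)
          * (g ((rconj j θ (w, v)).1) * F ((rconj j θ (w, v)).2)) ∂nuA
    rw [mul_left_comm]
    congr 1
    exact (integral_const_mul' nuA (∑ m, v m ^ 2) _).symm
  exact hΨ2.integral_prod_right.congr (Filter.Eventually.of_forall fun v => (hpt v).symm)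

end ROpLemmas

end KacAux

theorem statement_10 (N : ℕ) (hN : 2 ≤ N) (lam mu : ℝ) (hlam : 0 < lam) (hmu : 0 < mu)
    (g : ℝ → ℝ) (hg : IsProbDensity1 g)
    (hg1 : Integrable (fun x => x * g x)) (hgmean : ∫ x, x * g x = 0)
    (hg2 : Integrable (fun x => x ^ 2 * g x))
    (F : V N → ℝ) (hF : IsProbDensity F)
    (hFmean : ∀ k : Fin N, ∫ v : V N, v k * F v = 0)
    (hF2 : Integrable (fun v : V N => (∑ i, v i ^ 2) * F v)) :
    IsProbDensity (PhiOp (lam / (lam + mu)) g F) ∧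
      (∀ k : Fin N, ∫ v : V N, v k * PhiOp (lam / (lam + mu)) g F v = 0) ∧
      Integrable (fun v : V N => (∑ i, v i ^ 2) * PhiOp (lam / (lam + mu)) g F v) := by
  obtain ⟨hFpos, hFint, hFone⟩ := hF
  obtain ⟨hgpos, hgint, hgone⟩ := hg
  set γ : ℝ := lam / (lam + mu) with hγdef
  have hlm : 0 < lam + mu := by linarith
  have hγ0 : 0 ≤ γ := div_nonneg hlam.le hlm.le
  have hγ1 : 0 ≤ 1 - γ := by
    rw [sub_nonneg, hγdef]
    exact div_le_one_of_le₀ (by linarith) hlm.le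
  have hNpos : (0:ℝ) < N := by
    have : (2:ℝ) ≤ N := by exact_mod_cast hN
    linarith
  have hQpos := QOp_nonneg (F := F) hFpos
  have hQint := QOp_integrable (F := F) hFint
  have hQone := QOp_integral hN hFint hFone
  have hQmean := QOp_mean hFpos hFint hFmean hF2
  have hQmom := QOp_moment hFint hF2
  have hRpos : ∀ (j : Fin N) (v : V N), 0 ≤ ROp g j F v :=
    fun j v => ROp_nonneg hgpos hFpos j v
  have hRint : ∀ j : Fin N, Integrable (ROp g j F) := fun j => ROp_integrable hgint hFint j
  have hRone : ∀ j : Fin N, ∫ v, ROp g j F v = 1 :=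
    fun j => ROp_integral hgint hgone hFint hFone j
  have hRmean : ∀ k j : Fin N, ∫ v : V N, v k * ROp g j F v = 0 :=
    fun k j => ROp_mean hgpos hgint hg1 hgmean hg2 hFpos hFint hFmean hF2 k j
  have hRmom : ∀ j : Fin N, Integrable (fun v : V N => (∑ m, v m ^ 2) * ROp g j F v) :=
    fun j => ROp_moment hgpos hgint hg2 hFpos hFint hF2 j
  have hSint : Integrable (fun v : V N => ∑ j, ROp g j F v) :=
    integrable_finset_sum _ fun j _ => hRint j
  have hint1 : Integrable (fun v : V N => γ * QOp F v) := hQint.const_mul γ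
  have hint2 : Integrable (fun v : V N => (1 - γ) * (N:ℝ)⁻¹ * ∑ j, ROp g j F v) :=
    hSint.const_mul _
  have hPhiInt : Integrable (PhiOp γ g F) := by
    exact (hint1.add hint2).congr (Filter.Eventually.of_forall fun v => rfl)
  have hPhiOne : ∫ v, PhiOp γ g F v = 1 := by
    unfold PhiOp
    rw [integral_add hint1 hint2, integral_const_mul' volume, integral_const_mul' volume,
      hQone, integral_finset_sum _ fun j _ => hRint j,
      Finset.sum_congr rfl fun (j : Fin N) _ => hRone j]
    have hsum : ∑ _j : Fin N, (1:ℝ) = (N:ℝ) := by simp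
    rw [hsum, mul_one, mul_assoc, inv_mul_cancel₀ hNpos.ne', mul_one]
    ring
  have hPhiPos : ∀ v, 0 ≤ PhiOp γ g F v := by
    intro v
    unfold PhiOp
    refine add_nonneg (mul_nonneg hγ0 (hQpos v)) ?_
    exact mul_nonneg (mul_nonneg hγ1 (inv_nonneg.mpr hNpos.le))
      (Finset.sum_nonneg fun j _ => hRpos j v)
  refine ⟨⟨hPhiPos, hPhiInt, hPhiOne⟩, ?_, ?_⟩
  · intro k
    have hQk := integrable_coord_mul hQpos hQint hQmom k
    have hRk : ∀ j : Fin N, Integrable (fun v : V N => v k * ROp g j F v) :=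
      fun j => integrable_coord_mul (hRpos j) (hRint j) (hRmom j) k
    have hpt : ∀ v : V N, v k * PhiOp γ g F v
        = γ * (v k * QOp F v) + ((1 - γ) * (N:ℝ)⁻¹) * ∑ j, v k * ROp g j F v := by
      intro v
      show v k * (γ * QOp F v + (1 - γ) * (N:ℝ)⁻¹ * ∑ j, ROp g j F v) = _
      rw [← Finset.mul_sum]
      ring
    rw [integral_congr_ae (Filter.Eventually.of_forall hpt),
      integral_add (hQk.const_mul γ)
        ((integrable_finset_sum _ fun j _ => hRk j).const_mul _),
      integral_const_mul' volume, integral_const_mul' volume, hQmean k,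
      integral_finset_sum _ fun j _ => hRk j]
    rw [Finset.sum_congr rfl fun (j : Fin N) _ => hRmean k j]
    simp
  · have := (hQmom.const_mul γ).add
      ((integrable_finset_sum (Finset.univ : Finset (Fin N)) fun j _ => hRmom j).const_mul
        ((1 - γ) * (N:ℝ)⁻¹))
    refine this.congr (Filter.Eventually.of_forall fun v => ?_)
    show γ * ((∑ m, v m ^ 2) * QOp F v)
        + ((1 - γ) * (N:ℝ)⁻¹) * ∑ j, (∑ m, v m ^ 2) * ROp g j F v
      = (∑ i, v i ^ 2) * PhiOp γ g F v
    rw [← Finset.mul_sum]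
    unfold PhiOp
    ring

end
end

section
/- Let f, h be probability densities on ℝ with finite second moments and the same first moment. Then for every N ≥ 1, the Gabetta–Toscani–Wennberg distance between the N-fold tensor products equals the one between the factors: d_{GTW,N}(f^{⊗N}, h^{⊗N}) = d_{GTW,1}(f, h). -/
open MeasureTheory Real Finset

noncomputable section

/-! ### Auxiliary lemmas -/

lemma aux_integral_ofReal (g : ℝ → ℝ) : ∫ x, ((g x : ℝ) : ℂ) = ((∫ x, g x : ℝ) : ℂ) :=
  integral_ofReal

lemma aux_norm_exp_mul_I_sub_one_le (x : ℝ) : ‖Complex.exp (x * Complex.I) - 1‖ ≤ |x| := by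
  have h1 : Complex.exp (x * Complex.I) - 1 = Complex.mk (Real.cos x - 1) (Real.sin x) := by
    rw [Complex.exp_mul_I]
    apply Complex.ext <;>
      simp [Complex.cos_ofReal_re, Complex.sin_ofReal_re, Complex.cos_ofReal_im,
        Complex.sin_ofReal_im]
  rw [h1, Complex.norm_def, Complex.normSq_mk, ← Real.sqrt_sq_eq_abs]
  apply Real.sqrt_le_sqrt
  have h2 := Real.one_sub_sq_div_two_le_cos (x := x)
  have h3 := Real.sin_sq_add_cos_sq x
  nlinarith

lemma aux_norm_exp_key (x : ℝ) :
    ‖Complex.exp (-Complex.I * (x : ℂ)) - 1 + Complex.I * x‖ ≤ 2 * x ^ 2 := by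
  have habs : ‖(-Complex.I * (x : ℂ))‖ = |x| := by
    simp
  rcases le_or_gt |x| 1 with hx | hx
  · have key := Complex.norm_exp_sub_one_sub_id_le (x := -Complex.I * (x : ℂ))
      (by rw [habs]; exact hx)
    rw [habs] at key
    have h2 : Complex.exp (-Complex.I * (x:ℂ)) - 1 + Complex.I * x
        = Complex.exp (-Complex.I * (x:ℂ)) - 1 - (-Complex.I * (x:ℂ)) := by ring
    rw [h2]
    calc ‖_‖ ≤ |x| ^ 2 := key
      _ ≤ 2 * x ^ 2 := by rw [sq_abs]; nlinarith [sq_nonneg x]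
  · have hrw : -Complex.I * (x : ℂ) = ((-x : ℝ) : ℂ) * Complex.I := by push_cast; ring
    calc ‖Complex.exp (-Complex.I * (x : ℂ)) - 1 + Complex.I * x‖
        ≤ ‖Complex.exp (-Complex.I * (x : ℂ)) - 1‖ + ‖Complex.I * (x:ℂ)‖ := norm_add_le _ _
      _ ≤ |(-x : ℝ)| + |x| := by
          rw [hrw]
          gcongr
          · exact aux_norm_exp_mul_I_sub_one_le (-x)
          · simp
      _ ≤ 2 * x ^ 2 := by rw [abs_neg]; nlinarith [abs_nonneg x, sq_abs x]

lemma aux_ft1_integrand_integrable {g : ℝ → ℝ} (hgi : Integrable g) (ξ : ℝ) :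
    Integrable (fun v : ℝ => (g v : ℂ) * Complex.exp (-Complex.I * ((v * ξ : ℝ) : ℂ))) := by
  apply Integrable.mono' hgi.norm
  · exact (Complex.continuous_ofReal.comp_aestronglyMeasurable hgi.aestronglyMeasurable).mul
      ((Complex.continuous_exp.comp (by fun_prop)).aestronglyMeasurable)
  · filter_upwards with v
    rw [norm_mul]
    have : ‖Complex.exp (-Complex.I * ((v * ξ : ℝ) : ℂ))‖ = 1 := by
      rw [Complex.norm_exp]
      simp
    rw [this, mul_one, Complex.norm_real]

lemma aux_ft1_zero {g : ℝ → ℝ} (hgI : ∫ x, g x = 1) : ft1 g 0 = 1 := by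
  unfold ft1
  simp only [mul_zero, Complex.ofReal_zero, Complex.exp_zero, mul_one]
  rw [aux_integral_ofReal, hgI, Complex.ofReal_one]

lemma aux_norm_ft1_le_one {g : ℝ → ℝ} (hg0 : ∀ x, 0 ≤ g x) (hgI : ∫ x, g x = 1) (ξ : ℝ) :
    ‖ft1 g ξ‖ ≤ 1 := by
  calc ‖ft1 g ξ‖ ≤ ∫ v, ‖(g v : ℂ) * Complex.exp (-Complex.I * ((v * ξ : ℝ) : ℂ))‖ :=
        norm_integral_le_integral_norm _
    _ = ∫ v, g v := by
        congr 1; funext v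
        rw [norm_mul]
        have : ‖Complex.exp (-Complex.I * ((v * ξ : ℝ) : ℂ))‖ = 1 := by
          rw [Complex.norm_exp]; simp
        rw [this, mul_one, Complex.norm_real, Real.norm_eq_abs, abs_of_nonneg (hg0 v)]
    _ = 1 := hgI

lemma aux_ft1_decomp {g : ℝ → ℝ} (hg0 : ∀ x, 0 ≤ g x) (hgi : Integrable g)
    (hg1 : Integrable (fun x => x * g x)) (hg2 : Integrable (fun x => x ^ 2 * g x))
    (hgI : ∫ x, g x = 1) (ξ : ℝ) :
    ft1 g ξ = (∫ v, (g v : ℂ) *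
        (Complex.exp (-Complex.I * ((v * ξ : ℝ) : ℂ)) - 1 + Complex.I * (v * ξ : ℝ)))
      + 1 - Complex.I * ξ * ((∫ x, x * g x : ℝ) : ℂ) := by
  have I1 : Integrable (fun v : ℝ => (g v : ℂ) *
      (Complex.exp (-Complex.I * ((v * ξ : ℝ) : ℂ)) - 1 + Complex.I * (v * ξ : ℝ))) := by
    refine Integrable.mono' (hg2.const_mul (2 * ξ ^ 2)) ?_ ?_
    · exact (Complex.continuous_ofReal.comp_aestronglyMeasurable hgi.aestronglyMeasurable).mul
        (((Complex.continuous_exp.comp (by fun_prop)).sub continuous_const).add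
          (by fun_prop)).aestronglyMeasurable
    · filter_upwards with v
      rw [norm_mul, Complex.norm_real, Real.norm_eq_abs, abs_of_nonneg (hg0 v)]
      calc g v * ‖Complex.exp (-Complex.I * ((v * ξ : ℝ) : ℂ)) - 1 + Complex.I * (v * ξ : ℝ)‖
          ≤ g v * (2 * (v * ξ) ^ 2) := by
            apply mul_le_mul_of_nonneg_left (aux_norm_exp_key (v * ξ)) (hg0 v)
        _ = 2 * ξ ^ 2 * (v ^ 2 * g v) := by ring
  have I2 : Integrable (fun v : ℝ => (g v : ℂ)) := hgi.ofReal
  have I3 : Integrable (fun v : ℝ => (Complex.I * ξ) * ((v * g v : ℝ) : ℂ)) :=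
    (hg1.ofReal.const_mul _)
  have hpt : ∀ v : ℝ, (g v : ℂ) * Complex.exp (-Complex.I * ((v * ξ : ℝ) : ℂ))
      = (g v : ℂ) * (Complex.exp (-Complex.I * ((v * ξ : ℝ) : ℂ)) - 1 + Complex.I * (v * ξ : ℝ))
        + ((g v : ℂ) - (Complex.I * ξ) * ((v * g v : ℝ) : ℂ)) := by
    intro v; push_cast; ring
  unfold ft1
  rw [show (fun v : ℝ => (g v : ℂ) * Complex.exp (-Complex.I * ((v * ξ : ℝ) : ℂ)))
      = fun v => (g v : ℂ) *
          (Complex.exp (-Complex.I * ((v * ξ : ℝ) : ℂ)) - 1 + Complex.I * (v * ξ : ℝ))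
        + ((g v : ℂ) - (Complex.I * ξ) * ((v * g v : ℝ) : ℂ)) from funext hpt]
  have I23 : Integrable (fun v : ℝ => (g v : ℂ) - (Complex.I * ξ) * ((v * g v : ℝ) : ℂ)) :=
    I2.sub I3
  rw [integral_add I1 I23, integral_sub I2 I3, integral_const_mul,
    aux_integral_ofReal, aux_integral_ofReal (fun v => v * g v), hgI]
  push_cast
  ring

lemma aux_ft1_sub_bound {f h : ℝ → ℝ} (hf0 : ∀ x, 0 ≤ f x) (hh0 : ∀ x, 0 ≤ h x)
    (hfi : Integrable f) (hhi : Integrable h)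
    (hf1 : Integrable (fun x => x * f x)) (hh1 : Integrable (fun x => x * h x))
    (hf2 : Integrable (fun x => x ^ 2 * f x)) (hh2 : Integrable (fun x => x ^ 2 * h x))
    (hfI : ∫ x, f x = 1) (hhI : ∫ x, h x = 1)
    (hmean : ∫ x, x * f x = ∫ x, x * h x) (ξ : ℝ) :
    ‖ft1 f ξ - ft1 h ξ‖ ≤ 2 * ((∫ x, x ^ 2 * f x) + (∫ x, x ^ 2 * h x)) * ξ ^ 2 := by
  have key : ∀ (g : ℝ → ℝ), (∀ x, 0 ≤ g x) → Integrable g →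
      Integrable (fun x => x ^ 2 * g x) →
      ‖∫ v, (g v : ℂ) *
          (Complex.exp (-Complex.I * ((v * ξ : ℝ) : ℂ)) - 1 + Complex.I * (v * ξ : ℝ))‖
        ≤ 2 * (∫ x, x ^ 2 * g x) * ξ ^ 2 := by
    intro g hg0 hgi hg2
    calc ‖∫ v, (g v : ℂ) *
          (Complex.exp (-Complex.I * ((v * ξ : ℝ) : ℂ)) - 1 + Complex.I * (v * ξ : ℝ))‖
        ≤ ∫ v, ‖(g v : ℂ) *
          (Complex.exp (-Complex.I * ((v * ξ : ℝ) : ℂ)) - 1 + Complex.I * (v * ξ : ℝ))‖ :=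
          norm_integral_le_integral_norm _
      _ ≤ ∫ v, 2 * ξ ^ 2 * (v ^ 2 * g v) := by
          apply integral_mono_of_nonneg
          · filter_upwards with v; positivity
          · exact hg2.const_mul _
          · filter_upwards with v
            rw [norm_mul, Complex.norm_real, Real.norm_eq_abs, abs_of_nonneg (hg0 v)]
            calc g v * ‖Complex.exp (-Complex.I * ((v * ξ : ℝ) : ℂ)) - 1
                  + Complex.I * (v * ξ : ℝ)‖ ≤ g v * (2 * (v * ξ) ^ 2) :=
                  mul_le_mul_of_nonneg_left (aux_norm_exp_key (v * ξ)) (hg0 v)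
              _ = 2 * ξ ^ 2 * (v ^ 2 * g v) := by ring
      _ = 2 * (∫ x, x ^ 2 * g x) * ξ ^ 2 := by
          rw [integral_const_mul]; ring
  rw [aux_ft1_decomp hf0 hfi hf1 hf2 hfI ξ, aux_ft1_decomp hh0 hhi hh1 hh2 hhI ξ, hmean]
  have : (∫ v, (f v : ℂ) *
        (Complex.exp (-Complex.I * ((v * ξ : ℝ) : ℂ)) - 1 + Complex.I * (v * ξ : ℝ)))
      + 1 - Complex.I * ξ * ((∫ x, x * h x : ℝ) : ℂ)
      - ((∫ v, (h v : ℂ) *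
        (Complex.exp (-Complex.I * ((v * ξ : ℝ) : ℂ)) - 1 + Complex.I * (v * ξ : ℝ)))
      + 1 - Complex.I * ξ * ((∫ x, x * h x : ℝ) : ℂ))
      = (∫ v, (f v : ℂ) *
        (Complex.exp (-Complex.I * ((v * ξ : ℝ) : ℂ)) - 1 + Complex.I * (v * ξ : ℝ)))
      - (∫ v, (h v : ℂ) *
        (Complex.exp (-Complex.I * ((v * ξ : ℝ) : ℂ)) - 1 + Complex.I * (v * ξ : ℝ))) := by
    ring
  rw [this]
  calc ‖_ - _‖ ≤ ‖(∫ v, (f v : ℂ) *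
        (Complex.exp (-Complex.I * ((v * ξ : ℝ) : ℂ)) - 1 + Complex.I * (v * ξ : ℝ)))‖
      + ‖(∫ v, (h v : ℂ) *
        (Complex.exp (-Complex.I * ((v * ξ : ℝ) : ℂ)) - 1 + Complex.I * (v * ξ : ℝ)))‖ :=
      norm_sub_le _ _
    _ ≤ 2 * (∫ x, x ^ 2 * f x) * ξ ^ 2 + 2 * (∫ x, x ^ 2 * h x) * ξ ^ 2 :=
      add_le_add (key f hf0 hfi hf2) (key h hh0 hhi hh2)
    _ = 2 * ((∫ x, x ^ 2 * f x) + (∫ x, x ^ 2 * h x)) * ξ ^ 2 := by ring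

lemma aux_ft_tensorPow (g : ℝ → ℝ) (N : ℕ) (ξ : V N) :
    ft (tensorPow g N) ξ = ∏ i, ft1 g (ξ i) := by
  unfold ft tensorPow ft1
  rw [← MeasureTheory.integral_fintype_prod_eq_prod (ι := Fin N)
    (f := fun i (x : ℝ) => (g x : ℂ) * Complex.exp (-Complex.I * ((x * ξ i : ℝ) : ℂ)))]
  congr 1
  funext v
  rw [Finset.prod_mul_distrib, ← Complex.exp_sum]
  congr 1
  · push_cast; rfl
  · congr 1
    push_cast
    rw [Finset.mul_sum]

lemma aux_norm_prod_sub_prod_le {ι : Type*} [DecidableEq ι] (s : Finset ι) (a b : ι → ℂ)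
    (ha : ∀ i, ‖a i‖ ≤ 1) (hb : ∀ i, ‖b i‖ ≤ 1) :
    ‖(∏ i ∈ s, a i) - ∏ i ∈ s, b i‖ ≤ ∑ i ∈ s, ‖a i - b i‖ := by
  induction s using Finset.induction with
  | empty => simp
  | @insert j s hj ih =>
    rw [Finset.prod_insert hj, Finset.prod_insert hj, Finset.sum_insert hj]
    have key : a j * ∏ i ∈ s, a i - b j * ∏ i ∈ s, b i
        = a j * ((∏ i ∈ s, a i) - ∏ i ∈ s, b i) + (a j - b j) * ∏ i ∈ s, b i := by ring
    rw [key]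
    have hbs : ‖∏ i ∈ s, b i‖ ≤ 1 := by
      rw [norm_prod]
      exact Finset.prod_le_one (fun i _ => norm_nonneg _) (fun i _ => hb i)
    calc ‖a j * ((∏ i ∈ s, a i) - ∏ i ∈ s, b i) + (a j - b j) * ∏ i ∈ s, b i‖
        ≤ ‖a j‖ * ‖(∏ i ∈ s, a i) - ∏ i ∈ s, b i‖ + ‖a j - b j‖ * ‖∏ i ∈ s, b i‖ := by
          refine (norm_add_le _ _).trans ?_
          rw [norm_mul, norm_mul]
      _ ≤ 1 * (∑ i ∈ s, ‖a i - b i‖) + ‖a j - b j‖ * 1 :=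
          add_le_add (mul_le_mul (ha j) ih (norm_nonneg _) zero_le_one)
            (mul_le_mul_of_nonneg_left hbs (norm_nonneg _))
      _ = ‖a j - b j‖ + ∑ i ∈ s, ‖a i - b i‖ := by ring


theorem statement_16 (f h : ℝ → ℝ) (hf : IsProbDensity1 f) (hh : IsProbDensity1 h)
    (hf1 : Integrable (fun x => x * f x)) (hh1 : Integrable (fun x => x * h x))
    (hf2 : Integrable (fun x => x ^ 2 * f x)) (hh2 : Integrable (fun x => x ^ 2 * h x))
    (hmean : ∫ x, x * f x = ∫ x, x * h x) (N : ℕ) (hN : 1 ≤ N) :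
    dGTW (tensorPow f N) (tensorPow h N) = dGTW1 f h := by
  obtain ⟨hf0, hfi, hfI⟩ := hf
  obtain ⟨hh0, hhi, hhI⟩ := hh
  have key1 : ∀ ξ : ℝ, ‖ft1 f ξ - ft1 h ξ‖
      ≤ 2 * ((∫ x, x ^ 2 * f x) + (∫ x, x ^ 2 * h x)) * ξ ^ 2 :=
    aux_ft1_sub_bound hf0 hh0 hfi hhi hf1 hh1 hf2 hh2 hfI hhI hmean
  have bdd1 : BddAbove (Set.range fun ξ : {ξ : ℝ // ξ ≠ 0} =>
      ‖ft1 f ξ.1 - ft1 h ξ.1‖ / (ξ.1) ^ 2) := by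
    refine ⟨2 * ((∫ x, x ^ 2 * f x) + (∫ x, x ^ 2 * h x)), ?_⟩
    rintro _ ⟨ξ, rfl⟩
    have hpos : 0 < ξ.1 ^ 2 := by have := ξ.2; positivity
    rw [div_le_iff₀ hpos]
    exact key1 ξ.1
  have d1nonneg : 0 ≤ dGTW1 f h := by
    refine le_trans ?_ (le_ciSup bdd1 ⟨1, one_ne_zero⟩)
    positivity
  have hΔ : ∀ ξ : ℝ, ‖ft1 f ξ - ft1 h ξ‖ ≤ dGTW1 f h * ξ ^ 2 := by
    intro ξ
    rcases eq_or_ne ξ 0 with rfl | hξ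
    · rw [aux_ft1_zero hfI, aux_ft1_zero hhI]
      simp
    · have hpos : 0 < ξ ^ 2 := by positivity
      have := le_ciSup bdd1 ⟨ξ, hξ⟩
      rw [div_le_iff₀ hpos] at this
      exact this
  have hpossum : ∀ ξ : V N, ξ ≠ 0 → 0 < ∑ i, (ξ i) ^ 2 := by
    intro ξ hξ
    obtain ⟨i, hi⟩ : ∃ i, ξ i ≠ 0 := by
      by_contra hcon
      push_neg at hcon
      exact hξ (funext hcon)
    exact Finset.sum_pos' (fun j _ => sq_nonneg _) ⟨i, Finset.mem_univ i, by positivity⟩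
  have keyN : ∀ ξ : V N, ‖ft (tensorPow f N) ξ - ft (tensorPow h N) ξ‖
      ≤ dGTW1 f h * ∑ i, (ξ i) ^ 2 := by
    intro ξ
    rw [aux_ft_tensorPow, aux_ft_tensorPow]
    calc ‖(∏ i, ft1 f (ξ i)) - ∏ i, ft1 h (ξ i)‖
        ≤ ∑ i, ‖ft1 f (ξ i) - ft1 h (ξ i)‖ :=
          aux_norm_prod_sub_prod_le _ _ _ (fun i => aux_norm_ft1_le_one hf0 hfI _)
            (fun i => aux_norm_ft1_le_one hh0 hhI _)
      _ ≤ ∑ i, dGTW1 f h * (ξ i) ^ 2 := Finset.sum_le_sum fun i _ => hΔ (ξ i)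
      _ = dGTW1 f h * ∑ i, (ξ i) ^ 2 := by rw [Finset.mul_sum]
  have bddN : BddAbove (Set.range fun ξ : {ξ : V N // ξ ≠ 0} =>
      ‖ft (tensorPow f N) ξ.1 - ft (tensorPow h N) ξ.1‖ / ∑ i, (ξ.1 i) ^ 2) := by
    refine ⟨dGTW1 f h, ?_⟩
    rintro _ ⟨ξ, rfl⟩
    rw [div_le_iff₀ (hpossum ξ.1 ξ.2)]
    exact keyN ξ.1
  have i0 : Fin N := ⟨0, hN⟩
  have hη1 : (Pi.single i0 (1:ℝ) : V N) ≠ 0 := by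
    intro hcon
    have := congrFun hcon i0
    simp [Pi.single_eq_same] at this
  have dNnonneg : 0 ≤ dGTW (tensorPow f N) (tensorPow h N) := by
    refine le_trans ?_ (le_ciSup bddN ⟨Pi.single i0 (1:ℝ), hη1⟩)
    positivity
  apply le_antisymm
  · apply Real.iSup_le _ d1nonneg
    intro ξ
    rw [div_le_iff₀ (hpossum ξ.1 ξ.2)]
    exact keyN ξ.1
  · apply Real.iSup_le _ dNnonneg
    intro ξ
    set η : V N := Pi.single i0 ξ.1 with hηdef
    have hη : η ≠ 0 := by
      intro hcon
      exact ξ.2 (by simpa [hηdef, Pi.single_eq_same] using congrFun hcon i0)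
    have hsum : ∑ i, (η i) ^ 2 = ξ.1 ^ 2 := by
      rw [Finset.sum_eq_single i0]
      · rw [hηdef, Pi.single_eq_same]
      · intro j _ hj
        rw [hηdef, Pi.single_eq_of_ne hj]
        simp
      · intro hcon
        exact absurd (Finset.mem_univ i0) hcon
    have hprod : ∀ (g : ℝ → ℝ), (∫ x, g x = 1) → (∏ i, ft1 g (η i)) = ft1 g ξ.1 := by
      intro g hgI
      rw [Finset.prod_eq_single i0]
      · rw [hηdef, Pi.single_eq_same]
      · intro j _ hj
        rw [hηdef, Pi.single_eq_of_ne hj, aux_ft1_zero hgI]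
      · intro hcon
        exact absurd (Finset.mem_univ i0) hcon
    have hval : ‖ft1 f ξ.1 - ft1 h ξ.1‖ / ξ.1 ^ 2
        = ‖ft (tensorPow f N) η - ft (tensorPow h N) η‖ / ∑ i, (η i) ^ 2 := by
      rw [aux_ft_tensorPow, aux_ft_tensorPow, hprod f hfI, hprod h hhI, hsum]
    rw [hval]
    exact le_ciSup bddN ⟨η, hη⟩


end
end

section
/- If μ_N and ν_N are probability measures on ℝ^N with finite second moments that are invariant under permutations of the coordinates, then W_{2,1}(Π₁(μ_N), Π₁(ν_N)) ≤ (1/√N) · W_{2,N}(μ_N, ν_N), where Π₁ denotes the first marginal. -/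
open MeasureTheory Real Finset
open scoped ENNReal

noncomputable section

lemma map_finset_sum' {ι α β : Type*} [MeasurableSpace α] [MeasurableSpace β] (s : Finset ι)
    (m : ι → Measure α) {f : α → β} (hf : Measurable f) :
    (∑ i ∈ s, m i).map f = ∑ i ∈ s, (m i).map f := by
  induction s using Finset.cons_induction with
  | empty => simp
  | cons a s ha ih => simp [Finset.sum_cons, Measure.map_add _ _ hf, ih]

lemma marg_sym {N : ℕ} (hN : 1 ≤ N) (m : Measure (V N))
    (hsym : ∀ σ : Equiv.Perm (Fin N), m.map (fun v => v ∘ σ) = m) (k : Fin N) :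
    m.map (fun v => v k) = m.map (fun v : V N => v ⟨0, hN⟩) := by
  set i0 : Fin N := ⟨0, by omega⟩
  have hσ := hsym (Equiv.swap i0 k)
  have hmeas : Measurable (fun v : V N => v ∘ (Equiv.swap i0 k)) :=
    measurable_pi_lambda _ fun i => measurable_pi_apply _
  conv_rhs => rw [← hσ]
  rw [Measure.map_map (measurable_pi_apply i0) hmeas]
  congr 1

theorem statement_19 (N : ℕ) (hN : 1 ≤ N) (μ ν : Measure (V N))
    [IsProbabilityMeasure μ] [IsProbabilityMeasure ν]
    (hμ2 : Integrable (fun v : V N => ∑ i, v i ^ 2) μ)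
    (hν2 : Integrable (fun v : V N => ∑ i, v i ^ 2) ν)
    (hμsym : ∀ σ : Equiv.Perm (Fin N), μ.map (fun v => v ∘ σ) = μ)
    (hνsym : ∀ σ : Equiv.Perm (Fin N), ν.map (fun v => v ∘ σ) = ν) :
    W2r (μ.map fun v : V N => v ⟨0, by omega⟩) (ν.map fun v : V N => v ⟨0, by omega⟩) ≤
      (Real.sqrt N)⁻¹ * W2 μ ν := by
  have hNR : (0:ℝ) < N := by exact_mod_cast hN
  have hsN : (0:ℝ) < Real.sqrt N := Real.sqrt_pos.mpr hNR
  set i0 : Fin N := ⟨0, by omega⟩ with hi0def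
  set μ0 : Measure ℝ := μ.map (fun v : V N => v i0) with hμ0
  set ν0 : Measure ℝ := ν.map (fun v : V N => v i0) with hν0
  set S : Set ℝ := {c | ∃ γ : Measure (V N × V N), Coupling γ μ ν ∧
    c = Real.sqrt (∫ p, ∑ i, (p.1 i - p.2 i) ^ 2 ∂γ)} with hS
  have hcontN : Continuous (fun v : V N => ∑ i, v i ^ 2) :=
    continuous_finset_sum _ fun i _ => (continuous_apply i).pow 2
  have hcont1 : Continuous (fun p : ℝ × ℝ => (p.1 - p.2) ^ 2) := by continuity
  have hne : S.Nonempty := by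
    refine ⟨_, μ.prod ν, ⟨?_, ?_⟩, rfl⟩
    · simp [Measure.map_fst_prod]
    · simp [Measure.map_snd_prod]
  have hbound : ∀ c ∈ S, Real.sqrt N * W2r μ0 ν0 ≤ c := by
    rintro c ⟨γ, ⟨hfst, hsnd⟩, rfl⟩
    have hπ : ∀ k : Fin N, Measurable (fun p : V N × V N => (p.1 k, p.2 k)) := fun k =>
      ((measurable_pi_apply k).comp measurable_fst).prodMk
        ((measurable_pi_apply k).comp measurable_snd)
    -- integrability
    have h1 : Integrable (fun p : V N × V N => ∑ i, p.1 i ^ 2) γ := by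
      have h := hμ2; rw [← hfst] at h
      exact (integrable_map_measure hcontN.aestronglyMeasurable
        measurable_fst.aemeasurable).mp h
    have h2 : Integrable (fun p : V N × V N => ∑ i, p.2 i ^ 2) γ := by
      have h := hν2; rw [← hsnd] at h
      exact (integrable_map_measure hcontN.aestronglyMeasurable
        measurable_snd.aemeasurable).mp h
    have hterm : ∀ k : Fin N, Integrable (fun p : V N × V N => (p.1 k - p.2 k) ^ 2) γ := by
      intro k
      have hg : Integrable (fun p : V N × V N =>
          2 * (∑ i, p.1 i ^ 2) + 2 * (∑ i, p.2 i ^ 2)) γ := (h1.const_mul 2).add (h2.const_mul 2)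
      refine hg.mono ?_ (Filter.Eventually.of_forall fun p => ?_)
      · exact (((continuous_apply k).comp continuous_fst).sub
          ((continuous_apply k).comp continuous_snd)).pow 2 |>.aestronglyMeasurable
      · have h1k : p.1 k ^ 2 ≤ ∑ i, p.1 i ^ 2 :=
          Finset.single_le_sum (f := fun i => p.1 i ^ 2) (fun i _ => sq_nonneg _) (mem_univ k)
        have h2k : p.2 k ^ 2 ≤ ∑ i, p.2 i ^ 2 :=
          Finset.single_le_sum (f := fun i => p.2 i ^ 2) (fun i _ => sq_nonneg _) (mem_univ k)
        have hle : (p.1 k - p.2 k) ^ 2 ≤ 2 * (∑ i, p.1 i ^ 2) + 2 * (∑ i, p.2 i ^ 2) := by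
          nlinarith [sq_nonneg (p.1 k + p.2 k)]
        calc ‖(p.1 k - p.2 k) ^ 2‖ = (p.1 k - p.2 k) ^ 2 := by
              rw [Real.norm_eq_abs, abs_of_nonneg (sq_nonneg _)]
          _ ≤ 2 * (∑ i, p.1 i ^ 2) + 2 * (∑ i, p.2 i ^ 2) := hle
          _ ≤ ‖2 * (∑ i, p.1 i ^ 2) + 2 * (∑ i, p.2 i ^ 2)‖ := le_abs_self _
    -- the coupling of the marginals
    set m : Fin N → Measure (ℝ × ℝ) := fun k => γ.map (fun p => (p.1 k, p.2 k)) with hm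
    set η : Measure (ℝ × ℝ) := (N : ℝ≥0∞)⁻¹ • ∑ k : Fin N, m k with hη
    have hNne : (N : ℝ≥0∞) ≠ 0 := by exact_mod_cast Nat.cast_ne_zero.mpr (by omega)
    have hmk_fst : ∀ k : Fin N, (m k).map Prod.fst = μ0 := by
      intro k
      rw [hm]
      rw [Measure.map_map measurable_fst (hπ k)]
      have : (Prod.fst ∘ fun p : V N × V N => (p.1 k, p.2 k)) =
          (fun v : V N => v k) ∘ Prod.fst := rfl
      rw [this, ← Measure.map_map (measurable_pi_apply k) measurable_fst, hfst,
        marg_sym hN μ hμsym k]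
    have hmk_snd : ∀ k : Fin N, (m k).map Prod.snd = ν0 := by
      intro k
      rw [hm]
      rw [Measure.map_map measurable_snd (hπ k)]
      have : (Prod.snd ∘ fun p : V N × V N => (p.1 k, p.2 k)) =
          (fun v : V N => v k) ∘ Prod.snd := rfl
      rw [this, ← Measure.map_map (measurable_pi_apply k) measurable_snd, hsnd,
        marg_sym hN ν hνsym k]
    have hscal : ∀ (x : Measure ℝ), (N : ℝ≥0∞)⁻¹ • (∑ _k : Fin N, x) = x := by
      intro x
      rw [Finset.sum_const, card_univ, Fintype.card_fin,
        ← Nat.cast_smul_eq_nsmul ℝ≥0∞, smul_smul,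
        ENNReal.inv_mul_cancel hNne (ENNReal.natCast_ne_top N), one_smul]
    have hηfst : η.map Prod.fst = μ0 := by
      rw [hη, Measure.map_smul, map_finset_sum' _ _ measurable_fst]
      simp only [hmk_fst]
      exact hscal μ0
    have hηsnd : η.map Prod.snd = ν0 := by
      rw [hη, Measure.map_smul, map_finset_sum' _ _ measurable_snd]
      simp only [hmk_snd]
      exact hscal ν0
    -- integrals
    have hint : ∀ k : Fin N, Integrable (fun p : ℝ × ℝ => (p.1 - p.2) ^ 2) (m k) := by
      intro k
      exact (integrable_map_measure hcont1.aestronglyMeasurable (hπ k).aemeasurable).mpr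
        (hterm k)
    have hik : ∀ k : Fin N, ∫ p : ℝ × ℝ, (p.1 - p.2) ^ 2 ∂(m k) =
        ∫ p : V N × V N, (p.1 k - p.2 k) ^ 2 ∂γ := fun k => by
      rw [hm, integral_map (hπ k).aemeasurable hcont1.aestronglyMeasurable]
    have hI : ∫ p : ℝ × ℝ, (p.1 - p.2) ^ 2 ∂η =
        (N : ℝ)⁻¹ * ∫ p : V N × V N, ∑ i, (p.1 i - p.2 i) ^ 2 ∂γ := by
      rw [hη, integral_smul_measure, integral_finset_sum_measure fun k _ => hint k,
        Finset.sum_congr rfl fun k _ => hik k, ← integral_finset_sum _ fun k _ => hterm k]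
      simp [ENNReal.toReal_inv]
    have hInonneg : 0 ≤ ∫ p : V N × V N, ∑ i, (p.1 i - p.2 i) ^ 2 ∂γ :=
      integral_nonneg fun p => Finset.sum_nonneg fun i _ => sq_nonneg _
    -- conclude
    have hbdd : BddBelow {c | ∃ γ' : Measure (ℝ × ℝ), Coupling γ' μ0 ν0 ∧
        c = Real.sqrt (∫ p, (p.1 - p.2) ^ 2 ∂γ')} := by
      refine ⟨0, ?_⟩
      rintro x ⟨g, hg, rfl⟩
      exact Real.sqrt_nonneg _
    have hmem : Real.sqrt (∫ p : ℝ × ℝ, (p.1 - p.2) ^ 2 ∂η) ∈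
        {c | ∃ γ' : Measure (ℝ × ℝ), Coupling γ' μ0 ν0 ∧
          c = Real.sqrt (∫ p, (p.1 - p.2) ^ 2 ∂γ')} := ⟨η, ⟨hηfst, hηsnd⟩, rfl⟩
    have hle : W2r μ0 ν0 ≤ Real.sqrt (∫ p : ℝ × ℝ, (p.1 - p.2) ^ 2 ∂η) :=
      csInf_le hbdd hmem
    rw [hI, Real.sqrt_mul (by positivity), Real.sqrt_inv] at hle
    have := mul_le_mul_of_nonneg_left hle hsN.le
    calc Real.sqrt N * W2r μ0 ν0
        ≤ Real.sqrt N * ((Real.sqrt (N:ℝ))⁻¹ *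
            Real.sqrt (∫ p : V N × V N, ∑ i, (p.1 i - p.2 i) ^ 2 ∂γ)) := this
      _ = Real.sqrt (∫ p : V N × V N, ∑ i, (p.1 i - p.2 i) ^ 2 ∂γ) := by
          field_simp
  have hkey : Real.sqrt N * W2r μ0 ν0 ≤ sInf S := le_csInf hne hbound
  have : W2r μ0 ν0 ≤ (Real.sqrt N)⁻¹ * sInf S := by
    calc W2r μ0 ν0 = (Real.sqrt N)⁻¹ * (Real.sqrt N * W2r μ0 ν0) := by field_simp
      _ ≤ (Real.sqrt N)⁻¹ * sInf S := by
          exact mul_le_mul_of_nonneg_left hkey (by positivity)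
  rw [show W2 μ ν = sInf S from rfl]
  exact this


end
end
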